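/- arXiv:1508.06948 — 9 statements merged into one kernel-verified Lean document; each statement's English description precedes it below -/
import Mathlib

section
/- Under strong unconfoundedness, i.e., W ⟂⟂ (Y(1),...,Y(T)) | X, the treatment W is conditionally independent of (Y(1),...,Y(T)) given the vector of generalized propensity scores (p(1|X),...,p(T-1|X)). -/
open MeasureTheory ProbabilityTheory


/-- Helper: the indicator of a measurable set by `1` is integrable w.r.t. a finite measure. -/
theorem aux_indicator_one_integrable {Ω : Type*} {mΩ : MeasurableSpace Ω} (μ : Measure Ω)
    [IsFiniteMeasure μ] {s : Set Ω} (hs : MeasurableSet s) :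
    Integrable (s.indicator fun _ => (1 : ℝ)) μ :=
  (integrable_const 1).indicator hs

/-- Helper: a vector of measurable real functions is measurable, w.r.t. a given σ-algebra. -/
theorem aux_measurable_pi {Ω ι : Type*} [Fintype ι] {m : MeasurableSpace Ω} {p : ι → Ω → ℝ}
    (h : ∀ i, Measurable[m] (p i)) : Measurable[m] (fun ω i => p i ω) :=
  measurable_pi_lambda _ h

/-- Abstract balancing-score lemma: if `f ⟂⟂ g | m₂` and for every measurable set `s` in the
range of `f` the conditional probability `μ⟦f ⁻¹' s | m₂⟧` has an `m₁`-measurable a.e. version,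
with `m₁ ≤ m₂`, then `f ⟂⟂ g | m₁`. -/
theorem aux_balancing {Ω : Type*} {mΩ : MeasurableSpace Ω} [StandardBorelSpace Ω]
    {μ : Measure Ω} [IsProbabilityMeasure μ] {β γ : Type*} [MeasurableSpace β]
    [MeasurableSpace γ] {f : Ω → β} {g : Ω → γ} (hf : Measurable f) (hg : Measurable g)
    {m₁ m₂ : MeasurableSpace Ω} (hm12 : m₁ ≤ m₂) (hm₁ : m₁ ≤ mΩ) (hm₂ : m₂ ≤ mΩ)
    (hind : CondIndepFun m₂ hm₂ f g μ)
    (hproj : ∀ s : Set β, MeasurableSet s → ∃ q : Ω → ℝ,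
      StronglyMeasurable[m₁] q ∧ (μ⟦f ⁻¹' s | m₂⟧) =ᵐ[μ] q) :
    CondIndepFun m₁ hm₁ f g μ := by
  rw [condIndepFun_iff_condExp_inter_preimage_eq_mul hf hg] at hind ⊢
  intro s t hs ht
  obtain ⟨q, hqm, hq⟩ := hproj s hs
  have hq_int : Integrable q μ := integrable_condExp.congr hq
  have hg2_int : Integrable (μ⟦g ⁻¹' t | m₂⟧) μ := integrable_condExp
  -- the conditional probability of `g ⁻¹' t` is a.e. bounded by 1
  have hg2_bdd : ∀ᵐ ω ∂μ, ‖(μ⟦g ⁻¹' t | m₂⟧) ω‖ ≤ 1 := by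
    have h0 : (0 : Ω → ℝ) ≤ᵐ[μ] μ⟦g ⁻¹' t | m₂⟧ :=
      condExp_nonneg (Filter.Eventually.of_forall fun ω => Set.indicator_nonneg (by simp) ω)
    have hmt : MeasurableSet[mΩ] (g ⁻¹' t) := hg ht
    have hii : Integrable ((g ⁻¹' t).indicator (fun _ => (1 : ℝ))) μ :=
      aux_indicator_one_integrable μ hmt
    have h1 : μ⟦g ⁻¹' t | m₂⟧ ≤ᵐ[μ] μ[(fun _ => (1 : ℝ))|m₂] :=
      condExp_mono hii (integrable_const 1)
        (Filter.Eventually.of_forall fun ω => Set.indicator_le_self' (by simp) ω)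
    rw [condExp_const hm₂] at h1
    filter_upwards [h0, h1] with ω h0 h1
    simp only [Pi.zero_apply] at h0
    rw [Real.norm_eq_abs, abs_le]
    exact ⟨by linarith, h1⟩
  have hPg_int : Integrable ((μ⟦f ⁻¹' s | m₂⟧) * (μ⟦g ⁻¹' t | m₂⟧)) μ := by
    -- bounded (a.e.) times integrable
    have hP_bdd : ∀ᵐ ω ∂μ, ‖(μ⟦f ⁻¹' s | m₂⟧) ω‖ ≤ 1 := by
      have h0 : (0 : Ω → ℝ) ≤ᵐ[μ] μ⟦f ⁻¹' s | m₂⟧ :=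
        condExp_nonneg (Filter.Eventually.of_forall fun ω => Set.indicator_nonneg (by simp) ω)
      have hms : MeasurableSet[mΩ] (f ⁻¹' s) := hf hs
      have hii : Integrable ((f ⁻¹' s).indicator (fun _ => (1 : ℝ))) μ :=
        aux_indicator_one_integrable μ hms
      have h1 : μ⟦f ⁻¹' s | m₂⟧ ≤ᵐ[μ] μ[(fun _ => (1 : ℝ))|m₂] :=
        condExp_mono hii (integrable_const 1)
          (Filter.Eventually.of_forall fun ω => Set.indicator_le_self' (by simp) ω)
      rw [condExp_const hm₂] at h1
      filter_upwards [h0, h1] with ω h0 h1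
      simp only [Pi.zero_apply] at h0
      rw [Real.norm_eq_abs, abs_le]
      exact ⟨by linarith, h1⟩
    refine Integrable.mono' hg2_int.abs ?_ ?_
    · exact ((stronglyMeasurable_condExp.mono hm₂).mul
        (stronglyMeasurable_condExp.mono hm₂)).aestronglyMeasurable
    · filter_upwards [hP_bdd] with ω hb
      calc ‖(μ⟦f ⁻¹' s | m₂⟧) ω * (μ⟦g ⁻¹' t | m₂⟧) ω‖
          = ‖(μ⟦f ⁻¹' s | m₂⟧) ω‖ * ‖(μ⟦g ⁻¹' t | m₂⟧) ω‖ := norm_mul _ _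
        _ ≤ 1 * ‖(μ⟦g ⁻¹' t | m₂⟧) ω‖ := by gcongr
        _ = |(μ⟦g ⁻¹' t | m₂⟧) ω| := by rw [one_mul, Real.norm_eq_abs]
  have hqg_int : Integrable (q * (μ⟦g ⁻¹' t | m₂⟧)) μ := by
    refine hPg_int.congr ?_
    filter_upwards [hq] with ω hω
    simp [Pi.mul_apply, hω]
  -- the key chain of a.e. equalities
  have key : (μ⟦f ⁻¹' s ∩ g ⁻¹' t | m₁⟧) =ᵐ[μ] q * μ[(μ⟦g ⁻¹' t | m₂⟧)|m₁] := by
    calc (μ⟦f ⁻¹' s ∩ g ⁻¹' t | m₁⟧)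
        =ᵐ[μ] μ[(μ⟦f ⁻¹' s ∩ g ⁻¹' t | m₂⟧)|m₁] := (condExp_condExp_of_le hm12 hm₂).symm
      _ =ᵐ[μ] μ[(fun ω => (μ⟦f ⁻¹' s | m₂⟧) ω * (μ⟦g ⁻¹' t | m₂⟧) ω)|m₁] :=
          condExp_congr_ae (hind s t hs ht)
      _ =ᵐ[μ] μ[q * (μ⟦g ⁻¹' t | m₂⟧)|m₁] := by
          refine condExp_congr_ae ?_
          filter_upwards [hq] with ω hω
          simp [Pi.mul_apply, hω]
      _ =ᵐ[μ] q * μ[(μ⟦g ⁻¹' t | m₂⟧)|m₁] :=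
          condExp_mul_of_stronglyMeasurable_left hqm hqg_int hg2_int
  have hA1 : (μ⟦f ⁻¹' s | m₁⟧) =ᵐ[μ] q := by
    calc (μ⟦f ⁻¹' s | m₁⟧)
        =ᵐ[μ] μ[(μ⟦f ⁻¹' s | m₂⟧)|m₁] := (condExp_condExp_of_le hm12 hm₂).symm
      _ =ᵐ[μ] μ[q|m₁] := condExp_congr_ae hq
      _ = q := condExp_of_stronglyMeasurable hm₁ hqm hq_int
  have hB1 : μ[(μ⟦g ⁻¹' t | m₂⟧)|m₁] =ᵐ[μ] (μ⟦g ⁻¹' t | m₁⟧) := condExp_condExp_of_le hm12 hm₂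
  filter_upwards [key, hA1, hB1] with ω h1 h2 h3
  rw [h1, Pi.mul_apply, h2, h3]

/-- Under strong unconfoundedness `W ⟂⟂ (Y(1),...,Y(T)) | X`, the treatment
is conditionally independent of the potential outcomes given the vector of generalized
propensity scores `(p(1|X),...,p(T-1|X))` (here treatments are indexed by `Fin (T+1)`,
and we condition on the scores of the first `T` levels). -/
theorem strong_unconf_gps_vector {Ω E : Type*} [mΩ : MeasurableSpace Ω]
    [StandardBorelSpace Ω] [MeasurableSpace E]
    (μ : Measure Ω) [IsProbabilityMeasure μ] (T : ℕ)
    (W : Ω → Fin (T + 1)) (X : Ω → E) (Y : Fin (T + 1) → Ω → ℝ)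
    (hW : Measurable W) (hX : Measurable X) (hY : ∀ w, Measurable (Y w))
    (p : Fin (T + 1) → Ω → ℝ)
    (hp : ∀ w, p w = μ[(fun ω => if W ω = w then (1 : ℝ) else 0) |
        MeasurableSpace.comap X inferInstance])
    (hmX : MeasurableSpace.comap X inferInstance ≤ mΩ)
    (hmp : MeasurableSpace.comap (fun ω (w : Fin T) => p w.castSucc ω) inferInstance ≤ mΩ)
    (hstrong : CondIndepFun (MeasurableSpace.comap X inferInstance) hmX
        W (fun ω (w : Fin (T + 1)) => Y w ω) μ) :
    CondIndepFun (MeasurableSpace.comap (fun ω (w : Fin T) => p w.castSucc ω) inferInstance) hmp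
        W (fun ω (w : Fin (T + 1)) => Y w ω) μ := by
  classical
  have hYv : Measurable (fun ω (w : Fin (T + 1)) => Y w ω) := measurable_pi_lambda _ hY
  -- each p w is measurable w.r.t. σ(X)
  have hpmX : ∀ w, StronglyMeasurable[MeasurableSpace.comap X inferInstance] (p w) := by
    intro w; rw [hp w]; exact stronglyMeasurable_condExp
  -- σ(pv) ≤ σ(X)
  have hGX : MeasurableSpace.comap (fun ω (w : Fin T) => p w.castSucc ω) inferInstance ≤
      MeasurableSpace.comap X inferInstance :=
    Measurable.comap_le (aux_measurable_pi fun w => (hpmX w.castSucc).measurable)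
  -- coordinates of pv are σ(pv)-measurable
  have hpvG : Measurable[MeasurableSpace.comap (fun ω (w : Fin T) => p w.castSucc ω)
      inferInstance] (fun ω (w : Fin T) => p w.castSucc ω) := measurable_iff_comap_le.mpr le_rfl
  have hcoordG : ∀ w : Fin T, StronglyMeasurable[MeasurableSpace.comap
      (fun ω (w : Fin T) => p w.castSucc ω) inferInstance] (p w.castSucc) := fun w =>
    ((measurable_pi_apply w).comp hpvG).stronglyMeasurable
  -- indicator functions
  have hfint : ∀ w : Fin (T + 1), Integrable (fun ω => if W ω = w then (1 : ℝ) else 0) μ := by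
    intro w
    have : (fun ω => if W ω = w then (1 : ℝ) else 0)
        = (W ⁻¹' {w}).indicator (fun _ => (1 : ℝ)) := by
      funext ω; simp [Set.indicator_apply]
    rw [this]
    exact (integrable_const 1).indicator (hW (measurableSet_singleton w))
  -- the sum of all p w is a.e. 1
  have hsum1 : (fun ω => ∑ w : Fin (T + 1), p w ω) =ᵐ[μ] fun _ => (1 : ℝ) := by
    have h1 : (∑ w : Fin (T + 1), fun ω => if W ω = w then (1 : ℝ) else 0)
        = fun _ => (1 : ℝ) := by
      funext ω
      simp [Finset.sum_apply, Finset.sum_ite_eq]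
    have h2 := condExp_finsetSum (μ := μ) (m := MeasurableSpace.comap X inferInstance)
      (s := (Finset.univ : Finset (Fin (T + 1))))
      (f := fun w ω => if W ω = w then (1 : ℝ) else 0) (fun w _ => hfint w)
    rw [h1, condExp_const hmX] at h2
    have h4 : (∑ w : Fin (T + 1),
        μ[(fun ω => if W ω = w then (1 : ℝ) else 0)|MeasurableSpace.comap X inferInstance])
        = ∑ w : Fin (T + 1), p w :=
      Finset.sum_congr rfl fun w _ => (hp w).symm
    rw [h4] at h2
    refine Filter.EventuallyEq.trans ?_ h2.symm
    filter_upwards with ω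
    simp [Finset.sum_apply]
  have hplast : p (Fin.last T) =ᵐ[μ] fun ω => 1 - ∑ w : Fin T, p w.castSucc ω := by
    filter_upwards [hsum1] with ω hω
    simp only [Fin.sum_univ_castSucc] at hω
    show p (Fin.last T) ω = 1 - ∑ w : Fin T, p w.castSucc ω
    linarith
  -- apply the abstract lemma
  refine aux_balancing hW hYv hGX hmp hmX hstrong ?_
  intro s hs
  -- G-measurable a.e. versions of each p w
  set r : Fin (T + 1) → Ω → ℝ := fun w =>
    if w = Fin.last T then (fun ω => 1 - ∑ w' : Fin T, p w'.castSucc ω) else p w with hrdef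
  have hr_meas : ∀ w, StronglyMeasurable[MeasurableSpace.comap
      (fun ω (w : Fin T) => p w.castSucc ω) inferInstance] (r w) := by
    intro w
    by_cases hw : w = Fin.last T
    · simp only [hrdef, if_pos hw]
      exact stronglyMeasurable_const.sub
        (Finset.stronglyMeasurable_fun_sum _ fun w' _ => hcoordG w')
    · simp only [hrdef, if_neg hw]
      have : w = (w.castPred hw).castSucc := (Fin.castSucc_castPred w hw).symm
      rw [this]
      exact hcoordG _
  have hr_ae : ∀ w, p w =ᵐ[μ] r w := by
    intro w
    by_cases hw : w = Fin.last T
    · simp only [hrdef, if_pos hw, hw]; exact hplast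
    · simp only [hrdef, if_neg hw]
      exact Filter.EventuallyEq.rfl
  refine ⟨fun ω => ∑ w ∈ Finset.univ.filter (· ∈ s), r w ω,
    Finset.stronglyMeasurable_fun_sum _ fun w _ => hr_meas w, ?_⟩
  -- μ⟦W ⁻¹' s | σ(X)⟧ =ᵐ ∑_{w ∈ s} p w =ᵐ ∑_{w ∈ s} r w
  have hAind : (W ⁻¹' s).indicator (fun _ => (1 : ℝ))
      = ∑ w ∈ Finset.univ.filter (· ∈ s), fun ω => if W ω = w then (1 : ℝ) else 0 := by
    funext ω
    rw [Finset.sum_apply]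
    simp only [Set.indicator_apply, Set.mem_preimage]
    rw [Finset.sum_ite_eq (Finset.univ.filter (· ∈ s)) (W ω) (fun _ => (1 : ℝ))]
    simp
  have h2 := condExp_finsetSum (μ := μ) (m := MeasurableSpace.comap X inferInstance)
    (s := Finset.univ.filter (· ∈ s))
    (f := fun w ω => if W ω = w then (1 : ℝ) else 0) (fun w _ => hfint w)
  rw [← hAind] at h2
  refine h2.trans ?_
  have hall : ∀ᵐ ω ∂μ, ∀ w, p w ω = r w ω := ae_all_iff.mpr hr_ae
  filter_upwards [hall] with ω hω
  rw [Finset.sum_apply]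
  refine Finset.sum_congr rfl fun w _ => ?_
  rw [← hp w]
  exact hω w
end

section
/- The generalized propensity score is a balancing score for each treatment level: for every w, P(W = w | X, p(w|X)) = p(w|X) almost surely, i.e., the treatment indicator D(w) = 1{W = w} is conditionally independent of X given p(w|X). -/
open MeasureTheory ProbabilityTheory

private lemma ind_integrable {Ω : Type*} {mΩ : MeasurableSpace Ω} (μ : Measure Ω)
    [IsFiniteMeasure μ] {A : Set Ω} (hA : MeasurableSet A) :
    Integrable (A.indicator fun _ => (1 : ℝ)) μ :=
  (integrable_const (1 : ℝ)).indicator hA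

private lemma ind_sm {Ω : Type*} {m : MeasurableSpace Ω} {A : Set Ω}
    (hA : MeasurableSet[m] A) :
    StronglyMeasurable[m] (A.indicator fun _ => (1 : ℝ)) :=
  stronglyMeasurable_const.indicator hA

private lemma ind_aesm {Ω : Type*} {mΩ : MeasurableSpace Ω} (μ : Measure Ω)
    {A : Set Ω} (hA : MeasurableSet A) :
    AEStronglyMeasurable (A.indicator fun _ => (1 : ℝ)) μ :=
  (ind_sm hA).aestronglyMeasurable

/-- The generalized propensity score is a balancing score for each treatment
level: for every `w`, `P(W = w | X, p(w|X)) = p(w|X)` a.s., i.e. `D(w) = 1{W = w}` is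
conditionally independent of `X` given `p(w|X)`. -/
theorem gps_is_balancing_score {Ω E : Type*} [mΩ : MeasurableSpace Ω]
    [StandardBorelSpace Ω] [MeasurableSpace E]
    (μ : Measure Ω) [IsProbabilityMeasure μ] (T : ℕ)
    (W : Ω → Fin T) (X : Ω → E) (hW : Measurable W) (hX : Measurable X)
    (p : Fin T → Ω → ℝ)
    (hp : ∀ w, p w = μ[(fun ω => if W ω = w then (1 : ℝ) else 0) |
        MeasurableSpace.comap X inferInstance])
    (hmXp : ∀ w : Fin T,
      MeasurableSpace.comap (fun ω => (X ω, p w ω)) inferInstance ≤ mΩ)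
    (hmp : ∀ w : Fin T, MeasurableSpace.comap (p w) inferInstance ≤ mΩ) :
    ∀ w : Fin T,
      (μ[(fun ω => if W ω = w then (1 : ℝ) else 0) |
          MeasurableSpace.comap (fun ω => (X ω, p w ω)) inferInstance] =ᵐ[μ] p w)
      ∧ CondIndepFun (MeasurableSpace.comap (p w) inferInstance) (hmp w)
          (fun ω => if W ω = w then (1 : ℝ) else 0) X μ := by
  classical
  intro w
  have hmX : MeasurableSpace.comap X inferInstance ≤ mΩ := hX.comap_le
  set mX := MeasurableSpace.comap X inferInstance with hmX_def
  set m' := MeasurableSpace.comap (p w) inferInstance with hm'_def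
  set mXp := MeasurableSpace.comap (fun ω => (X ω, p w ω)) inferInstance with hmXp_def
  set D : Ω → ℝ := fun ω => if W ω = w then (1 : ℝ) else 0 with hD_def
  have hpm : StronglyMeasurable[mX] (p w) := (hp w) ▸ stronglyMeasurable_condExp
  have hpm' : Measurable[m'] (p w) := measurable_iff_comap_le.mpr le_rfl
  have hpair : Measurable[mXp] (fun ω => (X ω, p w ω)) := measurable_iff_comap_le.mpr le_rfl
  have hXm : Measurable[mX] X := measurable_iff_comap_le.mpr le_rfl
  have h1 : m' ≤ mXp := (measurable_snd.comp hpair).comap_le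
  have h2 : mXp ≤ mX := (hXm.prodMk hpm.measurable).comap_le
  have hm'X : m' ≤ mX := h1.trans h2
  have hAmeas : MeasurableSet[mΩ] (W ⁻¹' {w}) := hW (measurableSet_singleton w)
  have hDmeas : Measurable[mΩ] D := Measurable.ite hAmeas measurable_const measurable_const
  have hDind : (W ⁻¹' {w}).indicator (fun _ => (1 : ℝ)) = D := by
    funext ω
    by_cases h : W ω = w <;> simp [hD_def, Set.indicator, h]
  have hDint : Integrable D μ := hDind ▸ ind_integrable μ hAmeas
  have hpint : Integrable (p w) μ := (hp w) ▸ integrable_condExp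
  constructor
  · -- part 1
    have ht := condExp_condExp_of_le (μ := μ) (f := D) h2 hmX
    refine ht.symm.trans ?_
    rw [← hp w, condExp_of_stronglyMeasurable (hmXp w)
      (hpm'.stronglyMeasurable.mono h1) hpint]
  · -- part 2
    rw [condIndepFun_iff_condExp_inter_preimage_eq_mul (mΩ := mΩ) (μ := μ) hDmeas hX]
    intro s t hs ht
    set A : Set Ω := W ⁻¹' {w} with hA_def
    set B : Set Ω := X ⁻¹' t with hB_def
    have hBmeasX : MeasurableSet[mX] B := ⟨t, ht, rfl⟩
    have hBmeas : MeasurableSet[mΩ] B := hmX _ hBmeasX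
    set indB : Ω → ℝ := B.indicator (fun _ => (1 : ℝ)) with hindB_def
    have hindBsm : StronglyMeasurable[mX] indB := ind_sm hBmeasX
    have hindBint : Integrable indB μ := ind_integrable μ hBmeas
    have hindBbdd : ∀ ω, ‖indB ω‖ ≤ 1 := by
      intro ω
      by_cases h : ω ∈ B <;> simp [hindB_def, Set.indicator, h]
    -- the conditional expectation of A given m' is p w
    have hA_eq : (μ⟦A|m'⟧) =ᵐ[μ] p w := by
      rw [hA_def, hDind]
      have ht2 := condExp_condExp_of_le (μ := μ) (f := D) hm'X hmX
      refine ht2.symm.trans ?_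
      rw [← hp w, condExp_of_stronglyMeasurable (hmp w) hpm'.stronglyMeasurable hpint]
    -- core computation
    have hABind : (A ∩ B).indicator (fun _ => (1 : ℝ)) = indB * D := by
      funext ω
      by_cases hA : W ω = w <;> by_cases hB : ω ∈ B <;>
        simp [hD_def, hindB_def, Set.indicator, hA, hB, Set.mem_inter_iff, hA_def,
          Set.mem_preimage, Set.mem_singleton_iff]
    have hABmeas : MeasurableSet[mΩ] (A ∩ B) := hAmeas.inter hBmeas
    have hABint : Integrable (indB * D) μ := hABind ▸ ind_integrable μ hABmeas
    have hpB_int : Integrable (p w * indB) μ := by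
      have h := Integrable.bdd_mul hpint (ind_aesm μ hBmeas) (c := 1) (Filter.Eventually.of_forall hindBbdd)
      have heq : (fun ω => indB ω * p w ω) = p w * indB := by
        funext ω; exact mul_comm _ _
      exact heq ▸ h
    have hcore : (μ⟦A ∩ B|m'⟧) =ᵐ[μ] fun ω => (μ⟦A|m'⟧) ω * (μ⟦B|m'⟧) ω := by
      rw [hABind]
      have htower := condExp_condExp_of_le (μ := μ) (f := indB * D) hm'X hmX
      refine htower.symm.trans ?_
      have hpull1 : μ[indB * D|mX] =ᵐ[μ] indB * μ[D|mX] :=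
        condExp_mul_of_stronglyMeasurable_left hindBsm hABint hDint
      have hpull1' : μ[indB * D|mX] =ᵐ[μ] p w * indB := by
        refine hpull1.trans ?_
        rw [← hp w]
        filter_upwards with ω using mul_comm _ _
      refine (condExp_congr_ae hpull1').trans ?_
      have hpull2 : μ[p w * indB|m'] =ᵐ[μ] p w * μ[indB|m'] :=
        condExp_mul_of_stronglyMeasurable_left hpm'.stronglyMeasurable hpB_int hindBint
      refine hpull2.trans ?_
      filter_upwards [hA_eq] with ω hω
      simp only [Pi.mul_apply]
      rw [hω]
    -- case on the set s
    have huniv : (μ⟦(Set.univ : Set Ω)|m'⟧) =ᵐ[μ] fun _ => (1 : ℝ) := by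
      rw [Set.indicator_univ, condExp_const (hmp w)]
    by_cases h1s : (1 : ℝ) ∈ s <;> by_cases h0s : (0 : ℝ) ∈ s
    · -- D⁻¹s = univ
      have hDpre : D ⁻¹' s = Set.univ := by
        ext ω
        by_cases hA : W ω = w <;> simp [hD_def, hA, h1s, h0s]
      rw [hDpre, Set.univ_inter]
      filter_upwards [huniv] with ω hω
      rw [hω, one_mul]
    · -- D⁻¹s = A
      have hDpre : D ⁻¹' s = A := by
        ext ω
        by_cases hA : W ω = w <;>
          simp [hD_def, hA, h1s, h0s, hA_def, Set.mem_preimage, Set.mem_singleton_iff]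
      rw [hDpre]
      exact hcore
    · -- D⁻¹s = Aᶜ
      have hDpre : D ⁻¹' s = Aᶜ := by
        ext ω
        by_cases hA : W ω = w <;>
          simp [hD_def, hA, h1s, h0s, hA_def, Set.mem_preimage, Set.mem_singleton_iff]
      rw [hDpre]
      have hcomplB : (Aᶜ ∩ B).indicator (fun _ => (1 : ℝ))
          = B.indicator (fun _ => (1 : ℝ)) - (A ∩ B).indicator (fun _ => (1 : ℝ)) := by
        funext ω
        by_cases hA : ω ∈ A <;> by_cases hB : ω ∈ B <;>
          simp [Set.indicator, hA, hB, Set.mem_inter_iff]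
      have hcompl : Aᶜ.indicator (fun _ => (1 : ℝ))
          = (fun _ => (1 : ℝ)) - A.indicator (fun _ => (1 : ℝ)) := by
        funext ω
        by_cases h : ω ∈ A <;> simp [Set.indicator, h]
      have hABint' : Integrable ((A ∩ B).indicator (fun _ => (1 : ℝ))) μ :=
        ind_integrable μ hABmeas
      have hAint : Integrable (A.indicator (fun _ => (1 : ℝ))) μ :=
        ind_integrable μ hAmeas
      have hsub1 : (μ⟦Aᶜ ∩ B|m'⟧) =ᵐ[μ] μ[indB|m'] - μ⟦A ∩ B|m'⟧ := by
        rw [hcomplB]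
        exact condExp_sub hindBint hABint' m'
      have hsub2 : (μ⟦Aᶜ|m'⟧) =ᵐ[μ] (fun _ => (1 : ℝ)) - μ⟦A|m'⟧ := by
        rw [hcompl]
        refine (condExp_sub (integrable_const _) hAint m').trans ?_
        filter_upwards with ω
        rw [condExp_const (hmp w)]
      filter_upwards [hsub1, hsub2, hcore] with ω hω1 hω2 hω3
      rw [hω1, hω2]
      simp only [Pi.sub_apply]
      rw [hω3]
      ring
    · -- D⁻¹s = ∅
      have hDpre : D ⁻¹' s = ∅ := by
        ext ω
        by_cases hA : W ω = w <;> simp [hD_def, hA, h1s, h0s]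
      rw [hDpre, Set.empty_inter]
      have hempty : (μ⟦(∅ : Set Ω)|m'⟧) =ᵐ[μ] fun _ => (0 : ℝ) := by
        have h0 : ((∅ : Set Ω).indicator fun _ => (1 : ℝ)) = (0 : Ω → ℝ) := by
          funext ω; simp
        rw [h0, condExp_zero]
        rfl
      filter_upwards [hempty] with ω hω
      rw [hω, zero_mul]
end

section
/- Suppose the assignment mechanism is weakly unconfounded: for each w, D(w) = 1{W = w} is conditionally independent of Y(w) given X. Then for each w, D(w) is conditionally independent of Y(w) given the scalar p(w|X) = P(W = w | X). -/
open MeasureTheory ProbabilityTheory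

/-- If the assignment is weakly unconfounded (`D(w) ⟂⟂ Y(w) | X` for each `w`),
then for each `w`, `D(w)` is conditionally independent of `Y(w)` given the scalar
generalized propensity score `p(w|X)`. -/
theorem weak_unconf_gps {Ω E : Type*} [mΩ : MeasurableSpace Ω]
    [StandardBorelSpace Ω] [MeasurableSpace E]
    (μ : Measure Ω) [IsProbabilityMeasure μ] (T : ℕ)
    (W : Ω → Fin T) (X : Ω → E) (Y : Fin T → Ω → ℝ)
    (hW : Measurable W) (hX : Measurable X) (hY : ∀ w, Measurable (Y w))
    (p : Fin T → Ω → ℝ)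
    (hp : ∀ w, p w = μ[(fun ω => if W ω = w then (1 : ℝ) else 0) |
        MeasurableSpace.comap X inferInstance])
    (hoverlap : ∀ w, ∀ᵐ ω ∂μ, 0 < p w ω)
    (hmX : MeasurableSpace.comap X inferInstance ≤ mΩ)
    (hmp : ∀ w : Fin T, MeasurableSpace.comap (p w) inferInstance ≤ mΩ)
    (hweak : ∀ w : Fin T, CondIndepFun (MeasurableSpace.comap X inferInstance) hmX
        (fun ω => if W ω = w then (1 : ℝ) else 0) (Y w) μ) :
    ∀ w : Fin T, CondIndepFun (MeasurableSpace.comap (p w) inferInstance) (hmp w)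
        (fun ω => if W ω = w then (1 : ℝ) else 0) (Y w) μ := by
  intro w
  set D : Ω → ℝ := fun ω => if W ω = w then (1 : ℝ) else 0 with hDdef
  set A : Set Ω := W ⁻¹' {w} with hAdef
  have hAmeas : MeasurableSet A := hW (measurableSet_singleton w)
  have hD : Measurable D :=
    Measurable.ite hAmeas measurable_const measurable_const
  -- D is the indicator of A
  have hD_ind : D = A.indicator (fun _ => (1 : ℝ)) := by
    funext ω
    by_cases h : W ω = w <;> simp [hDdef, hAdef, Set.indicator_apply, h]
  have hDint : Integrable D μ := by
    rw [hD_ind]; exact (integrable_const (1:ℝ)).indicator hAmeas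
  -- p w is (MeasurableSpace.comap X inferInstance)-strongly measurable
  have hpm1 : StronglyMeasurable[(MeasurableSpace.comap X inferInstance)] (p w) := by
    rw [hp w]; exact stronglyMeasurable_condExp
  have hm21 : (MeasurableSpace.comap (p w) inferInstance) ≤ (MeasurableSpace.comap X inferInstance) := hpm1.measurable.comap_le
  have hpm2 : StronglyMeasurable[(MeasurableSpace.comap (p w) inferInstance)] (p w) :=
    (Measurable.of_comap_le le_rfl).stronglyMeasurable
  have hpint : Integrable (p w) μ := by rw [hp w]; exact integrable_condExp
  -- bound on p
  have hp_bound : ∀ᵐ ω ∂μ, ‖p w ω‖ ≤ 1 := by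
    have h0 : (0 : Ω → ℝ) ≤ᵐ[μ] p w := by
      rw [hp w]
      exact condExp_nonneg (Filter.Eventually.of_forall fun ω => by
        simp only [Pi.zero_apply]; split <;> norm_num)
    have h1 : p w ≤ᵐ[μ] μ[(fun _ => (1:ℝ)) | (MeasurableSpace.comap X inferInstance)] := by
      rw [hp w]
      exact condExp_mono hDint (integrable_const 1)
        (Filter.Eventually.of_forall fun ω => by
          simp only [hDdef]; split <;> norm_num)
    rw [condExp_const hmX (1:ℝ)] at h1
    filter_upwards [h0, h1] with ω hω0 hω1
    simp only [Pi.zero_apply] at hω0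
    rw [Real.norm_eq_abs, abs_le]
    exact ⟨by linarith, hω1⟩
  -- conditional expectation of A given (MeasurableSpace.comap X inferInstance) is p w
  have hpA : μ⟦A | (MeasurableSpace.comap X inferInstance)⟧ =ᵐ[μ] p w := by
    rw [hp w, ← hD_ind]
  -- core identity
  have core : ∀ t : Set ℝ, MeasurableSet t →
      (μ⟦A ∩ (Y w ⁻¹' t) | (MeasurableSpace.comap (p w) inferInstance)⟧) =ᵐ[μ] fun ω => (μ⟦A | (MeasurableSpace.comap (p w) inferInstance)⟧) ω * (μ⟦Y w ⁻¹' t | (MeasurableSpace.comap (p w) inferInstance)⟧) ω := by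
    intro t ht
    set B : Set Ω := Y w ⁻¹' t with hBdef
    have hA1 : A = D ⁻¹' {1} := by
      ext ω
      simp only [hAdef, Set.mem_preimage, Set.mem_singleton_iff, hDdef]
      split <;> simp_all
    have h1 : (μ⟦A ∩ B | (MeasurableSpace.comap X inferInstance)⟧) =ᵐ[μ] fun ω => (μ⟦A | (MeasurableSpace.comap X inferInstance)⟧) ω * (μ⟦B | (MeasurableSpace.comap X inferInstance)⟧) ω := by
      have := (condIndepFun_iff_condExp_inter_preimage_eq_mul (hm' := hmX) hD (hY w)).mp
        (hweak w) {1} t (measurableSet_singleton 1) ht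
      rwa [← hA1] at this
    -- μ⟦A|(MeasurableSpace.comap (p w) inferInstance)⟧ = p w
    have hpA2 : μ⟦A | (MeasurableSpace.comap (p w) inferInstance)⟧ =ᵐ[μ] p w := by
      calc μ⟦A | (MeasurableSpace.comap (p w) inferInstance)⟧ =ᵐ[μ] μ[μ⟦A | (MeasurableSpace.comap X inferInstance)⟧ | (MeasurableSpace.comap (p w) inferInstance)] := (condExp_condExp_of_le hm21 hmX).symm
        _ =ᵐ[μ] μ[p w | (MeasurableSpace.comap (p w) inferInstance)] := condExp_congr_ae hpA
        _ = p w := condExp_of_stronglyMeasurable (hmp w) hpm2 hpint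
    calc μ⟦A ∩ B | (MeasurableSpace.comap (p w) inferInstance)⟧ =ᵐ[μ] μ[μ⟦A ∩ B | (MeasurableSpace.comap X inferInstance)⟧ | (MeasurableSpace.comap (p w) inferInstance)] := (condExp_condExp_of_le hm21 hmX).symm
      _ =ᵐ[μ] μ[(p w) * μ⟦B | (MeasurableSpace.comap X inferInstance)⟧ | (MeasurableSpace.comap (p w) inferInstance)] := by
          refine condExp_congr_ae (h1.trans ?_)
          filter_upwards [hpA] with ω hω
          simp only [Pi.mul_apply, hω]
      _ =ᵐ[μ] (p w) * μ[μ⟦B | (MeasurableSpace.comap X inferInstance)⟧ | (MeasurableSpace.comap (p w) inferInstance)] :=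
          condExp_stronglyMeasurable_mul_of_bound (hmp w) hpm2 integrable_condExp 1 hp_bound
      _ =ᵐ[μ] (p w) * μ⟦B | (MeasurableSpace.comap (p w) inferInstance)⟧ := by
          filter_upwards [condExp_condExp_of_le (μ := μ) hm21 hmX
            (f := B.indicator (fun _ => (1:ℝ)))] with ω hω
          simp only [Pi.mul_apply, hω]
      _ =ᵐ[μ] fun ω => (μ⟦A | (MeasurableSpace.comap (p w) inferInstance)⟧) ω * (μ⟦B | (MeasurableSpace.comap (p w) inferInstance)⟧) ω := by
          filter_upwards [hpA2] with ω hω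
          simp only [Pi.mul_apply, hω]
  -- now the main goal
  rw [condIndepFun_iff_condExp_inter_preimage_eq_mul (hm' := hmp w) hD (hY w)]
  intro s t hs ht
  set B : Set Ω := Y w ⁻¹' t with hBdef
  by_cases h1s : (1:ℝ) ∈ s <;> by_cases h0s : (0:ℝ) ∈ s
  · -- D ⁻¹' s = univ
    have hDs : D ⁻¹' s = Set.univ := by
      ext ω
      simp only [Set.mem_preimage, Set.mem_univ, iff_true, hDdef]
      split <;> assumption
    have h1c : μ[(Set.univ : Set Ω).indicator (fun _ => (1:ℝ)) | (MeasurableSpace.comap (p w) inferInstance)] = fun _ => (1:ℝ) := by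
      rw [Set.indicator_univ]; exact condExp_const (hmp w) 1
    rw [hDs, Set.univ_inter, h1c]
    exact Filter.Eventually.of_forall fun ω => (one_mul _).symm
  · -- D ⁻¹' s = A
    have hDs : D ⁻¹' s = A := by
      ext ω
      simp only [Set.mem_preimage, hAdef, Set.mem_singleton_iff, hDdef]
      split <;> simp_all
    rw [hDs]
    exact core t ht
  · -- D ⁻¹' s = Aᶜ
    have hDs : D ⁻¹' s = Aᶜ := by
      ext ω
      simp only [Set.mem_preimage, Set.mem_compl_iff, hAdef, Set.mem_singleton_iff, hDdef]
      split <;> simp_all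
    rw [hDs]
    have hind1 : (Aᶜ ∩ B).indicator (fun _ => (1:ℝ))
        = B.indicator (fun _ => (1:ℝ)) - (A ∩ B).indicator (fun _ => (1:ℝ)) := by
      funext ω
      by_cases hωB : ω ∈ B <;> by_cases hωA : ω ∈ A <;>
        simp [Set.indicator_apply, hωA, hωB]
    have hind2 : (Aᶜ).indicator (fun _ => (1:ℝ))
        = (fun _ => (1:ℝ)) - A.indicator (fun _ => (1:ℝ)) := by
      funext ω
      by_cases hωA : ω ∈ A <;> simp [Set.indicator_apply, hωA]
    have hBint : Integrable (B.indicator (fun _ => (1:ℝ))) μ :=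
      (integrable_const (1:ℝ)).indicator ((hY w) ht)
    have hABint : Integrable ((A ∩ B).indicator (fun _ => (1:ℝ))) μ :=
      (integrable_const (1:ℝ)).indicator (hAmeas.inter ((hY w) ht))
    have hsub1 : μ⟦Aᶜ ∩ B | (MeasurableSpace.comap (p w) inferInstance)⟧ =ᵐ[μ] μ⟦B | (MeasurableSpace.comap (p w) inferInstance)⟧ - μ⟦A ∩ B | (MeasurableSpace.comap (p w) inferInstance)⟧ := by
      rw [hind1]; exact condExp_sub hBint hABint _
    have hsub2 : μ⟦(Aᶜ : Set Ω) | (MeasurableSpace.comap (p w) inferInstance)⟧ =ᵐ[μ] (fun _ => (1:ℝ)) - μ⟦A | (MeasurableSpace.comap (p w) inferInstance)⟧ := by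
      rw [hind2]
      refine (condExp_sub (integrable_const 1)
        ((integrable_const (1:ℝ)).indicator hAmeas) _).trans ?_
      rw [condExp_const (hmp w) (1:ℝ)]
    filter_upwards [hsub1, hsub2, core t ht] with ω h1 h2 h3
    rw [h1, h2]
    simp only [Pi.sub_apply]
    rw [h3]
    ring
  · -- D ⁻¹' s = ∅
    have hDs : D ⁻¹' s = ∅ := by
      ext ω
      simp only [Set.mem_preimage, Set.mem_empty_iff_false, iff_false, hDdef]
      split <;> assumption
    have h0c : μ[(∅ : Set Ω).indicator (fun _ => (1:ℝ)) | (MeasurableSpace.comap (p w) inferInstance)] = fun _ => (0:ℝ) := by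
      have he : (∅ : Set Ω).indicator (fun _ => (1:ℝ)) = fun _ => (0:ℝ) := by
        funext ω; simp
      rw [he]; exact condExp_const (hmp w) 0
    rw [hDs, Set.empty_inter, h0c]
    exact Filter.Eventually.of_forall fun ω => by simp
end

section
/- Under weak unconfoundedness and overlap, for each treatment level w: E[Y(w)] = E[ E[Y^obs | W = w, p(w|X)] ], where Y^obs = Y(W) is the observed outcome and the inner conditional expectation is evaluated at the random value p(w|X). -/
open MeasureTheory ProbabilityTheory

/-- Under weak unconfoundedness and overlap,
`E[Y(w)] = E[ E[Y^obs | W = w, p(w|X)] ]`, where the inner conditional expectation given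
the event `W = w` and the score `p(w|X)` is the ratio
`E[1{W=w}·Y^obs | p(w|X)] / E[1{W=w} | p(w|X)]`. -/
theorem mean_potential_outcome_gps {Ω E : Type*} [mΩ : MeasurableSpace Ω]
    [StandardBorelSpace Ω] [MeasurableSpace E]
    (μ : Measure Ω) [IsProbabilityMeasure μ] (T : ℕ)
    (W : Ω → Fin T) (X : Ω → E) (Y : Fin T → Ω → ℝ)
    (hW : Measurable W) (hX : Measurable X) (hY : ∀ w, Measurable (Y w))
    (hYint : ∀ w, Integrable (Y w) μ)
    (p : Fin T → Ω → ℝ)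
    (hp : ∀ w, p w = μ[(fun ω => if W ω = w then (1 : ℝ) else 0) |
        MeasurableSpace.comap X inferInstance])
    (hoverlap : ∀ w, ∀ᵐ ω ∂μ, 0 < p w ω)
    (hmX : MeasurableSpace.comap X inferInstance ≤ mΩ)
    (hweak : ∀ w : Fin T, CondIndepFun (MeasurableSpace.comap X inferInstance) hmX
        (fun ω => if W ω = w then (1 : ℝ) else 0) (Y w) μ)
    (w : Fin T) :
    ∫ ω, Y w ω ∂μ
      = ∫ ω,
          ((μ[(fun ω' => (if W ω' = w then (1 : ℝ) else 0) * Y (W ω') ω') |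
              MeasurableSpace.comap (p w) inferInstance]) ω)
          / ((μ[(fun ω' => if W ω' = w then (1 : ℝ) else 0) |
              MeasurableSpace.comap (p w) inferInstance]) ω) ∂μ := by
  classical
  set 𝓧 : MeasurableSpace Ω := MeasurableSpace.comap X inferInstance with h𝓧
  set f : Ω → ℝ := fun ω => if W ω = w then (1 : ℝ) else 0 with hf_def
  set 𝓟 : MeasurableSpace Ω := MeasurableSpace.comap (p w) inferInstance with h𝓟
  -- basic facts
  have hf_meas : Measurable[mΩ] f := by
    refine Measurable.ite (hW (MeasurableSet.singleton w)) measurable_const measurable_const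
  have hf_nonneg : ∀ ω, 0 ≤ f ω := by
    intro ω; by_cases h : W ω = w <;> simp [hf_def, h]
  have hf_le_one : ∀ ω, ‖f ω‖ ≤ 1 := by
    intro ω; by_cases h : W ω = w <;> simp [hf_def, h]
  have hf_int : Integrable f μ :=
    (integrable_const (1 : ℝ)).mono' hf_meas.aestronglyMeasurable (ae_of_all _ hf_le_one)
  have hp_sm𝓧 : StronglyMeasurable[𝓧] (p w) := by
    rw [hp w]; exact stronglyMeasurable_condExp
  have h𝓟𝓧 : 𝓟 ≤ 𝓧 := by
    rw [h𝓟]; exact measurable_iff_comap_le.mp hp_sm𝓧.measurable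
  have hm𝓟 : 𝓟 ≤ mΩ := h𝓟𝓧.trans hmX
  have hp_measΩ : Measurable[mΩ] (p w) := (hp_sm𝓧.measurable).mono hmX le_rfl
  have hp_sm𝓟 : StronglyMeasurable[𝓟] (p w) :=
    (Measurable.stronglyMeasurable (measurable_iff_comap_le.mpr le_rfl))
  have hp_int : Integrable (p w) μ := by rw [hp w]; exact integrable_condExp
  have hp_nonneg : ∀ᵐ ω ∂μ, 0 ≤ p w ω := (hoverlap w).mono fun ω h => h.le
  have hp_le_one : ∀ᵐ ω ∂μ, ‖p w ω‖ ≤ 1 := by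
    have h1 : μ[f | 𝓧] ≤ᵐ[μ] μ[(fun _ => (1 : ℝ)) | 𝓧] :=
      condExp_mono hf_int (integrable_const 1) (ae_of_all _ fun ω => by
        simpa using (Real.norm_of_nonneg (hf_nonneg ω) ▸ hf_le_one ω))
    have h2 : μ[(fun _ : Ω => (1 : ℝ)) | 𝓧] = fun _ => (1 : ℝ) := condExp_const hmX (1 : ℝ)
    filter_upwards [h1, hp_nonneg] with ω hω1 hω3
    rw [Real.norm_of_nonneg hω3, hp w]
    calc (μ[f|𝓧]) ω ≤ (μ[(fun _ : Ω => (1:ℝ))|𝓧]) ω := hω1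
      _ = 1 := by rw [h2]
  -- m := E[Y w | X]
  set m : Ω → ℝ := μ[Y w | 𝓧] with hm_def
  have hm_int : Integrable m μ := integrable_condExp
  have hm_sm : StronglyMeasurable[𝓧] m := stronglyMeasurable_condExp
  have hm_measΩ : Measurable[mΩ] m := hm_sm.measurable.mono hmX le_rfl
  have hmul_int : ∀ g : Ω → ℝ, AEStronglyMeasurable[mΩ] g μ → Integrable g μ →
      Integrable (fun ω => p w ω * g ω) μ := by
    intro g hgm hgint
    refine hgint.norm.mono' (hp_measΩ.aestronglyMeasurable.mul hgm) ?_
    filter_upwards [hp_le_one] with ω hω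
    calc ‖p w ω * g ω‖ = ‖p w ω‖ * ‖g ω‖ := norm_mul _ _
      _ ≤ 1 * ‖g ω‖ := by gcongr
      _ = ‖g ω‖ := one_mul _
  have hpm_int : Integrable (fun ω => p w ω * m ω) μ :=
    hmul_int m hm_measΩ.aestronglyMeasurable hm_int
  -- KEY: factorization
  have hfY_int : Integrable (fun ω => f ω * Y w ω) μ := by
    refine (hYint w).norm.mono' (hf_meas.aestronglyMeasurable.mul (hY w).aestronglyMeasurable)
      (ae_of_all _ fun ω => ?_)
    calc ‖f ω * Y w ω‖ = ‖f ω‖ * ‖Y w ω‖ := norm_mul _ _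
      _ ≤ 1 * ‖Y w ω‖ := by gcongr; exact hf_le_one ω
      _ = ‖Y w ω‖ := one_mul _
  have hpull𝓧 : ∀ g : Ω → ℝ, AEStronglyMeasurable[mΩ] g μ → Integrable g μ →
      μ[fun ω => p w ω * g ω | 𝓧] =ᵐ[μ] fun ω => p w ω * (μ[g | 𝓧]) ω :=
    fun g hgm hgint =>
      condExp_mul_of_stronglyMeasurable_left (m := 𝓧) hp_sm𝓧 (hmul_int g hgm hgint) hgint
  letI : MeasurableSpace Ω := mΩ
  set ν : Measure ℝ := μ.map (Y w) with hν_def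
  have hYae : AEMeasurable (Y w) μ := (hY w).aemeasurable
  have hcomp_int : ∀ φ : ℝ → ℝ, Integrable φ ν → Integrable (fun ω => φ (Y w ω)) μ := by
    intro φ hφ
    rw [hν_def] at hφ
    exact (integrable_map_measure hφ.aestronglyMeasurable hYae).mp hφ
  have hint_gen : ∀ (g : Ω → ℝ), AEStronglyMeasurable g μ → (∀ᵐ ω ∂μ, ‖g ω‖ ≤ 1) →
      ∀ φ : ℝ → ℝ, Integrable φ ν → Integrable (fun ω => g ω * φ (Y w ω)) μ := by
    intro g hgm hgbd φ hφ
    refine (hcomp_int φ hφ).norm.mono' (hgm.mul (hcomp_int φ hφ).aestronglyMeasurable) ?_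
    filter_upwards [hgbd] with ω hω
    calc ‖g ω * φ (Y w ω)‖ = ‖g ω‖ * ‖φ (Y w ω)‖ := norm_mul _ _
      _ ≤ 1 * ‖φ (Y w ω)‖ := by gcongr
      _ = ‖φ (Y w ω)‖ := one_mul _
  have hkey : μ[fun ω => f ω * Y w ω | 𝓧] =ᵐ[μ] fun ω => p w ω * m ω := by
    refine (ae_eq_condExp_of_forall_setIntegral_eq hmX hfY_int
      (fun s _ _ => hpm_int.integrableOn)
      (fun s hs _ => ?_)
      (StronglyMeasurable.aestronglyMeasurable (hp_sm𝓧.mul hm_sm))).symm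
    have hsΩ : MeasurableSet[mΩ] s := hmX s hs
    -- step (ii)
    have hpY_int : Integrable (fun ω => p w ω * Y w ω) μ :=
      hmul_int (Y w) (hY w).aestronglyMeasurable (hYint w)
    have hii : ∫ x in s, p w x * m x ∂μ = ∫ x in s, p w x * Y w x ∂μ := by
      have h1 := hpull𝓧 (Y w) (hY w).aestronglyMeasurable (hYint w)
      calc ∫ x in s, p w x * m x ∂μ
          = ∫ x in s, (μ[fun ω => p w ω * Y w ω | 𝓧]) x ∂μ :=
            (integral_congr_ae (ae_restrict_of_ae h1)).symm
        _ = ∫ x in s, p w x * Y w x ∂μ := setIntegral_condExp hmX hpY_int hs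
    -- step (i) by induction over integrable functions on ℝ
    have hkeyP : ∀ φ : ℝ → ℝ, Integrable φ ν →
        ∫ ω in s, f ω * φ (Y w ω) ∂μ = ∫ ω in s, p w ω * φ (Y w ω) ∂μ := by
      intro φ hφ
      refine Integrable.induction (μ := ν)
        (P := fun φ => ∫ ω in s, f ω * φ (Y w ω) ∂μ = ∫ ω in s, p w ω * φ (Y w ω) ∂μ)
        ?_ ?_ ?_ ?_ hφ
      · -- indicator case
        intro c t ht _
        set g1 : Ω → ℝ := (Y w ⁻¹' t).indicator (fun _ => (1:ℝ)) with hg1_def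
        have hB : MeasurableSet[mΩ] (Y w ⁻¹' t) := (hY w) ht
        have hg1_meas : Measurable[mΩ] g1 := measurable_const.indicator hB
        have hg1_bd : ∀ ω, ‖g1 ω‖ ≤ 1 := by
          intro ω; by_cases h : Y w ω ∈ t <;> simp [hg1_def, Set.indicator_apply, h]
        have hg1_int : Integrable g1 μ :=
          (integrable_const (1:ℝ)).mono' hg1_meas.aestronglyMeasurable (ae_of_all _ hg1_bd)
        have hfg1_int : Integrable (fun ω => f ω * g1 ω) μ :=
          (integrable_const (1:ℝ)).mono'
            (hf_meas.aestronglyMeasurable.mul hg1_meas.aestronglyMeasurable)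
            (ae_of_all _ fun ω => by
              calc ‖f ω * g1 ω‖ = ‖f ω‖ * ‖g1 ω‖ := norm_mul _ _
                _ ≤ 1 * 1 := mul_le_mul (hf_le_one ω) (hg1_bd ω) (norm_nonneg _) zero_le_one
                _ = 1 := one_mul _)
        -- the set-level independence consequence
        have hindep := (condIndepFun_iff_condExp_inter_preimage_eq_mul
          (hm' := hmX) hf_meas (hY w)).mp (hweak w) {(1:ℝ)} t (measurableSet_singleton 1) ht
        have hfA : Set.indicator (f ⁻¹' {(1:ℝ)}) (fun _ => (1:ℝ)) = f := by
          funext ω; by_cases h : W ω = w <;>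
            simp [Set.indicator_apply, Set.mem_preimage, hf_def, h]
        have hinter : Set.indicator (f ⁻¹' {(1:ℝ)} ∩ Y w ⁻¹' t) (fun _ => (1:ℝ))
            = fun ω => f ω * g1 ω := by
          funext ω
          by_cases h1 : W ω = w <;> by_cases h2 : Y w ω ∈ t <;>
            simp [Set.indicator_apply, Set.mem_preimage, hf_def, hg1_def, h1, h2]
        have hAp : μ[Set.indicator (f ⁻¹' {(1:ℝ)}) (fun _ => (1:ℝ)) | 𝓧] = p w := by
          rw [hfA, ← hp w]
        rw [hAp, hinter] at hindep
        -- hindep : μ[fun ω => f ω * g1 ω|𝓧] =ᵐ[μ] fun ω => p w ω * (μ[g1|𝓧]) ω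
        have hcore : ∫ ω in s, f ω * g1 ω ∂μ = ∫ ω in s, p w ω * g1 ω ∂μ := by
          calc ∫ ω in s, f ω * g1 ω ∂μ
              = ∫ ω in s, (μ[fun ω => f ω * g1 ω | 𝓧]) ω ∂μ :=
                (setIntegral_condExp hmX hfg1_int hs).symm
            _ = ∫ ω in s, p w ω * (μ[g1 | 𝓧]) ω ∂μ :=
                integral_congr_ae (ae_restrict_of_ae hindep)
            _ = ∫ ω in s, (μ[fun ω => p w ω * g1 ω | 𝓧]) ω ∂μ :=
                (integral_congr_ae (ae_restrict_of_ae
                  (hpull𝓧 g1 hg1_meas.aestronglyMeasurable hg1_int))).symm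
            _ = ∫ ω in s, p w ω * g1 ω ∂μ :=
                setIntegral_condExp hmX (hmul_int g1 hg1_meas.aestronglyMeasurable hg1_int) hs
        have e1 : ∀ g : Ω → ℝ, (fun ω => g ω * t.indicator (fun _ => c) (Y w ω))
            = fun ω => c * (g ω * g1 ω) := by
          intro g; funext ω
          by_cases h : Y w ω ∈ t <;>
            simp [Set.indicator_apply, hg1_def, h] <;> ring
        calc ∫ ω in s, f ω * t.indicator (fun _ => c) (Y w ω) ∂μ
            = ∫ ω in s, c * (f ω * g1 ω) ∂μ := by rw [e1 f]
          _ = c * ∫ ω in s, f ω * g1 ω ∂μ := integral_const_mul c _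
          _ = c * ∫ ω in s, p w ω * g1 ω ∂μ := by rw [hcore]
          _ = ∫ ω in s, c * (p w ω * g1 ω) ∂μ := (integral_const_mul c _).symm
          _ = ∫ ω in s, p w ω * t.indicator (fun _ => c) (Y w ω) ∂μ := by rw [← e1 (p w)]
      · -- additivity
        intro φ ψ _ hφ hψ h1 h2
        have eadd : ∀ g : Ω → ℝ, (fun ω => g ω * (φ + ψ) (Y w ω))
            = fun ω => g ω * φ (Y w ω) + g ω * ψ (Y w ω) := by
          intro g; funext ω; simp [Pi.add_apply, mul_add]
        calc ∫ ω in s, f ω * (φ + ψ) (Y w ω) ∂μ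
            = ∫ ω in s, (f ω * φ (Y w ω) + f ω * ψ (Y w ω)) ∂μ := by rw [eadd f]
          _ = (∫ ω in s, f ω * φ (Y w ω) ∂μ) + ∫ ω in s, f ω * ψ (Y w ω) ∂μ :=
              integral_add
                (hint_gen f hf_meas.aestronglyMeasurable (ae_of_all _ hf_le_one) φ hφ).integrableOn
                (hint_gen f hf_meas.aestronglyMeasurable (ae_of_all _ hf_le_one) ψ hψ).integrableOn
          _ = (∫ ω in s, p w ω * φ (Y w ω) ∂μ) + ∫ ω in s, p w ω * ψ (Y w ω) ∂μ := by
              rw [h1, h2]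
          _ = ∫ ω in s, (p w ω * φ (Y w ω) + p w ω * ψ (Y w ω)) ∂μ :=
              (integral_add
                (hint_gen (p w) hp_measΩ.aestronglyMeasurable hp_le_one φ hφ).integrableOn
                (hint_gen (p w) hp_measΩ.aestronglyMeasurable hp_le_one ψ hψ).integrableOn).symm
          _ = ∫ ω in s, p w ω * (φ + ψ) (Y w ω) ∂μ := by rw [eadd (p w)]
      · -- closedness in L¹(ν)
        have hlip : ∀ g : Ω → ℝ, AEStronglyMeasurable g μ → (∀ᵐ ω ∂μ, ‖g ω‖ ≤ 1) →
            LipschitzWith 1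
              (fun φL : ℝ →₁[ν] ℝ => ∫ ω in s, g ω * (φL : ℝ → ℝ) (Y w ω) ∂μ) := by
          intro g hgm hgbd
          refine LipschitzWith.of_dist_le_mul fun a b => ?_
          have hIa := hint_gen g hgm hgbd a (L1.integrable_coeFn a)
          have hIb := hint_gen g hgm hgbd b (L1.integrable_coeFn b)
          have hab_int : Integrable (fun ω => (a : ℝ → ℝ) (Y w ω) - (b : ℝ → ℝ) (Y w ω)) μ :=
            (hcomp_int _ (L1.integrable_coeFn a)).sub (hcomp_int _ (L1.integrable_coeFn b))
          have hle : ‖∫ ω in s, (g ω * (a : ℝ → ℝ) (Y w ω) - g ω * (b : ℝ → ℝ) (Y w ω)) ∂μ‖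
              ≤ dist a b := by
            have c1 : ‖∫ ω in s, (g ω * (a : ℝ → ℝ) (Y w ω) - g ω * (b : ℝ → ℝ) (Y w ω)) ∂μ‖
                ≤ ∫ ω in s, ‖g ω * (a : ℝ → ℝ) (Y w ω) - g ω * (b : ℝ → ℝ) (Y w ω)‖ ∂μ :=
              norm_integral_le_integral_norm _
            have c2 : ∫ ω in s, ‖g ω * (a : ℝ → ℝ) (Y w ω) - g ω * (b : ℝ → ℝ) (Y w ω)‖ ∂μ
                ≤ ∫ ω in s, ‖(a : ℝ → ℝ) (Y w ω) - (b : ℝ → ℝ) (Y w ω)‖ ∂μ := by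
              refine integral_mono_ae ((hIa.sub hIb).norm).integrableOn
                hab_int.norm.integrableOn ?_
              refine ae_restrict_of_ae ?_
              filter_upwards [hgbd] with ω hω
              calc ‖g ω * (a : ℝ → ℝ) (Y w ω) - g ω * (b : ℝ → ℝ) (Y w ω)‖
                  = ‖g ω‖ * ‖(a : ℝ → ℝ) (Y w ω) - (b : ℝ → ℝ) (Y w ω)‖ := by
                    rw [← mul_sub, norm_mul]
                _ ≤ 1 * ‖(a : ℝ → ℝ) (Y w ω) - (b : ℝ → ℝ) (Y w ω)‖ := by gcongr
                _ = _ := one_mul _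
            have c3 : ∫ ω in s, ‖(a : ℝ → ℝ) (Y w ω) - (b : ℝ → ℝ) (Y w ω)‖ ∂μ
                ≤ ∫ ω, ‖(a : ℝ → ℝ) (Y w ω) - (b : ℝ → ℝ) (Y w ω)‖ ∂μ :=
              setIntegral_le_integral hab_int.norm (ae_of_all _ fun ω => norm_nonneg _)
            have c4 : ∫ ω, ‖(a : ℝ → ℝ) (Y w ω) - (b : ℝ → ℝ) (Y w ω)‖ ∂μ
                = ∫ y, ‖(a : ℝ → ℝ) y - (b : ℝ → ℝ) y‖ ∂ν := by
              exact (integral_map hYae (((Lp.aestronglyMeasurable a).sub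
                (Lp.aestronglyMeasurable b)).norm)).symm
            have c5 : ∫ y, ‖(a : ℝ → ℝ) y - (b : ℝ → ℝ) y‖ ∂ν
                = ∫ y, ‖(↑(a - b) : ℝ → ℝ) y‖ ∂ν := by
              refine integral_congr_ae ?_
              filter_upwards [Lp.coeFn_sub a b] with y hy
              rw [hy, Pi.sub_apply]
            have c6 : ∫ y, ‖(↑(a - b) : ℝ → ℝ) y‖ ∂ν = ‖a - b‖ :=
              (L1.norm_eq_integral_norm _).symm
            calc ‖∫ ω in s, (g ω * (a : ℝ → ℝ) (Y w ω) - g ω * (b : ℝ → ℝ) (Y w ω)) ∂μ‖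
                ≤ ∫ ω in s, ‖(a : ℝ → ℝ) (Y w ω) - (b : ℝ → ℝ) (Y w ω)‖ ∂μ := c1.trans c2
              _ ≤ ‖a - b‖ := by rw [← c6, ← c5, ← c4]; exact c3
              _ = dist a b := (dist_eq_norm a b).symm
          have hfin : dist (∫ ω in s, g ω * (a : ℝ → ℝ) (Y w ω) ∂μ)
              (∫ ω in s, g ω * (b : ℝ → ℝ) (Y w ω) ∂μ) ≤ dist a b := by
            rw [dist_eq_norm, ← integral_sub hIa.integrableOn hIb.integrableOn]
            exact hle
          simpa using hfin
        exact isClosed_eq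
          ((hlip f hf_meas.aestronglyMeasurable (ae_of_all _ hf_le_one)).continuous)
          ((hlip (p w) hp_measΩ.aestronglyMeasurable hp_le_one).continuous)
      · -- a.e. congruence
        intro φ ψ hφψ _ h1
        have hc : (fun ω => φ (Y w ω)) =ᵐ[μ] fun ω => ψ (Y w ω) := ae_eq_comp hYae hφψ
        have e1 : ∫ ω in s, f ω * φ (Y w ω) ∂μ = ∫ ω in s, f ω * ψ (Y w ω) ∂μ :=
          integral_congr_ae (ae_restrict_of_ae
            (hc.mono fun ω h => congrArg (fun z => f ω * z) h))
        have e2 : ∫ ω in s, p w ω * φ (Y w ω) ∂μ = ∫ ω in s, p w ω * ψ (Y w ω) ∂μ :=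
          integral_congr_ae (ae_restrict_of_ae
            (hc.mono fun ω h => congrArg (fun z => p w ω * z) h))
        rw [← e1, ← e2]; exact h1
    have hid : Integrable (fun x : ℝ => x) ν := by
      rw [hν_def]
      exact (integrable_map_measure aestronglyMeasurable_id hYae).mpr (hYint w)
    have hi := hkeyP (fun x => x) hid
    rw [hii]
    exact hi.symm

  -- numerator function equality
  have hnum_eq : (fun ω' => (if W ω' = w then (1 : ℝ) else 0) * Y (W ω') ω')
      = fun ω => f ω * Y w ω := by
    funext ω; by_cases h : W ω = w <;> simp [hf_def, h]
  -- denominator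
  have hD : μ[f | 𝓟] =ᵐ[μ] p w := by
    have h1 : μ[μ[f | 𝓧] | 𝓟] =ᵐ[μ] μ[f | 𝓟] := condExp_condExp_of_le h𝓟𝓧 hmX
    have h2 : μ[f | 𝓧] = p w := (hp w).symm
    rw [h2] at h1
    refine h1.symm.trans ?_
    rw [condExp_of_stronglyMeasurable hm𝓟 hp_sm𝓟 hp_int]
  -- numerator
  have hN : μ[fun ω => f ω * Y w ω | 𝓟] =ᵐ[μ] μ[fun ω => p w ω * m ω | 𝓟] := by
    have h1 : μ[μ[fun ω => f ω * Y w ω | 𝓧] | 𝓟] =ᵐ[μ] μ[fun ω => f ω * Y w ω | 𝓟] :=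
      condExp_condExp_of_le h𝓟𝓧 hmX
    exact h1.symm.trans (condExp_congr_ae hkey)
  -- final computation
  set q : Ω → ℝ := fun ω => (p w ω)⁻¹ with hq_def
  have hq_sm𝓟 : StronglyMeasurable[𝓟] q :=
    (Measurable.inv (measurable_iff_comap_le.mpr (le_of_eq h𝓟.symm))).stronglyMeasurable
  have hqpm_eq : (fun ω => q ω * (p w ω * m ω)) =ᵐ[μ] m := by
    filter_upwards [hoverlap w] with ω hω
    simp [hq_def, inv_mul_cancel_left₀ (ne_of_gt hω)]
  have hqpm_int : Integrable (fun ω => q ω * (p w ω * m ω)) μ := hm_int.congr hqpm_eq.symm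
  have hpull : μ[q * (fun ω => p w ω * m ω) | 𝓟]
      =ᵐ[μ] q * μ[(fun ω => p w ω * m ω) | 𝓟] :=
    condExp_mul_of_stronglyMeasurable_left hq_sm𝓟 hqpm_int hpm_int
  rw [hnum_eq]
  have hfinal : (fun ω => (μ[(fun ω => f ω * Y w ω) | 𝓟]) ω / (μ[f | 𝓟]) ω)
      =ᵐ[μ] μ[q * (fun ω => p w ω * m ω) | 𝓟] := by
    filter_upwards [hN, hD, hpull, hoverlap w] with ω h1 h2 h3 h4
    rw [h1, h2, h3]
    simp only [Pi.mul_apply, hq_def]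
    rw [div_eq_inv_mul]
  have h7 : ∫ x, (q * fun ω => p w ω * m ω) x ∂μ = ∫ x, m x ∂μ := integral_congr_ae hqpm_eq
  rw [integral_congr_ae hfinal, integral_condExp hm𝓟, h7, hm_def, integral_condExp hmX]
end

section
/- Under weak unconfoundedness and overlap, the average treatment effect between levels w and w' satisfies τ(w,w') = E[Y(w') − Y(w)] = E[ E[Y^obs | W = w', p(w'|X)] ] − E[ E[Y^obs | W = w, p(w|X)] ]. -/
open MeasureTheory ProbabilityTheory

set_option maxHeartbeats 1000000

section Aux

variable {Ω : Type*} {mΩ : MeasurableSpace Ω} {μ : Measure Ω}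

/-- Convert a set integral into an integral against the indicator of the set. -/
lemma integral_eq_integral_indicator_one_mul {s : Set Ω} (hs : MeasurableSet s) (h : Ω → ℝ) :
    ∫ ω in s, h ω ∂μ = ∫ ω, s.indicator (fun _ => (1 : ℝ)) ω * h ω ∂μ := by
  rw [← integral_indicator hs]
  refine integral_congr_ae (Filter.Eventually.of_forall fun ω => ?_)
  by_cases hω : ω ∈ s <;> simp [hω]

/-- Integrating an a.e.-bounded `m`-measurable function against a conditional expectation
is the same as integrating it against the function itself. -/
lemma integral_mul_condexp_eq {m : MeasurableSpace Ω} (hm : m ≤ mΩ) [IsFiniteMeasure μ]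
    {q g : Ω → ℝ} (hq : StronglyMeasurable[m] q) (hqb : ∀ᵐ ω ∂μ, ‖q ω‖ ≤ 1)
    (hg : Integrable g μ) :
    ∫ ω, q ω * (μ[g|m]) ω ∂μ = ∫ ω, q ω * g ω ∂μ := by
  have hqg : Integrable (fun ω => q ω * g ω) μ :=
    hg.bdd_mul ((hq.mono hm).aestronglyMeasurable) hqb
  have h1 : μ[(fun ω => q ω * g ω)|m] =ᵐ[μ] fun ω => q ω * (μ[g|m]) ω :=
    condExp_mul_of_stronglyMeasurable_left hq hqg hg
  calc ∫ ω, q ω * (μ[g|m]) ω ∂μ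
      = ∫ ω, (μ[(fun ω' => q ω' * g ω')|m]) ω ∂μ := (integral_congr_ae h1).symm
    _ = ∫ ω, q ω * g ω ∂μ := integral_condExp hm

/-- The map `f ↦ ∫ X * f dμ` is continuous on `L¹(μ.trim)` when `‖X‖ ≤ 1` a.e. -/
lemma continuous_weighted_integral (μ : Measure Ω) {mY : MeasurableSpace Ω}
    (hmY : mY ≤ mΩ) {X : Ω → ℝ} (hX : AEStronglyMeasurable[mΩ] X μ)
    (hXb : ∀ᵐ ω ∂μ, ‖X ω‖ ≤ 1) :
    Continuous fun f : Lp ℝ 1 (μ.trim hmY) => ∫ ω, X ω * f ω ∂μ := by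
  have hint : ∀ f : Lp ℝ 1 (μ.trim hmY), Integrable (⇑f) μ := fun f =>
    integrable_of_integrable_trim hmY (L1.integrable_coeFn f)
  refine (LipschitzWith.of_dist_le_mul (K := 1) fun f g => ?_).continuous
  rw [dist_eq_norm, dist_eq_norm]
  have hfg : Integrable (fun ω => ‖f ω - g ω‖) μ := ((hint f).sub (hint g)).norm
  have h1 : ∫ ω, X ω * f ω ∂μ - ∫ ω, X ω * g ω ∂μ = ∫ ω, X ω * (f ω - g ω) ∂μ := by
    rw [← integral_sub ((hint f).bdd_mul hX hXb) ((hint g).bdd_mul hX hXb)]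
    simp_rw [mul_sub]
  rw [h1]
  have h2 : ‖∫ ω, X ω * (f ω - g ω) ∂μ‖ ≤ ∫ ω, ‖f ω - g ω‖ ∂μ := by
    refine norm_integral_le_of_norm_le hfg ?_
    filter_upwards [hXb] with ω hω
    rw [norm_mul]
    exact mul_le_of_le_one_left (norm_nonneg _) hω
  refine h2.trans ?_
  have h3 : ∫ ω, ‖f ω - g ω‖ ∂μ = ∫ ω, ‖f ω - g ω‖ ∂(μ.trim hmY) :=
    integral_trim hmY (((Lp.stronglyMeasurable f).sub (Lp.stronglyMeasurable g)).norm)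
  have h4 : ‖f - g‖ = ∫ ω, ‖f ω - g ω‖ ∂(μ.trim hmY) := by
    rw [L1.norm_eq_integral_norm]
    exact integral_congr_ae ((Lp.coeFn_sub f g).fun_comp norm)
  rw [h3, ← h4]
  simp

end Aux

section Key

variable {Ω : Type*} {mΩ : MeasurableSpace Ω}

/-- Conditional expectations of real indicators are a.e. bounded by one. -/
lemma condexp_indicator_norm_le_one {m mΩ' : MeasurableSpace Ω} (hm : m ≤ mΩ')
    (μ : Measure Ω) [IsProbabilityMeasure μ] {B : Set Ω} (hB : MeasurableSet B) :
    ∀ᵐ ω ∂μ, ‖(μ[B.indicator (fun _ => (1 : ℝ))|m]) ω‖ ≤ 1 := by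
  have h0 : 0 ≤ᵐ[μ] μ[B.indicator (fun _ => (1 : ℝ))|m] :=
    condExp_nonneg (Filter.Eventually.of_forall fun ω =>
      Set.indicator_nonneg (fun _ _ => zero_le_one) ω)
  have h1 : μ[B.indicator (fun _ => (1 : ℝ))|m] ≤ᵐ[μ] μ[(fun _ => (1 : ℝ))|m] :=
    condExp_mono ((integrable_const (1 : ℝ)).indicator hB) (integrable_const (1 : ℝ))
      (Filter.Eventually.of_forall fun ω =>
        Set.indicator_le_self' (fun _ _ => zero_le_one) ω)
  filter_upwards [h0, h1] with ω hω0 hω1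
  simp only [Pi.zero_apply] at hω0
  rw [condExp_const hm] at hω1
  rw [Real.norm_eq_abs, abs_le]
  exact ⟨by linarith, hω1⟩

/-- Pull-out product formula for conditional expectation under conditional independence of
an indicator and an integrable function. -/
lemma condexp_indicator_mul_condIndep {m mΩ' : MeasurableSpace Ω} [StandardBorelSpace Ω]
    (hm : m ≤ mΩ') (μ : Measure Ω) [IsProbabilityMeasure μ]
    {A : Set Ω} (hA : MeasurableSet A) {g : Ω → ℝ} (hgm : Measurable g) (hg : Integrable g μ)
    (hindep : CondIndepFun m hm (A.indicator fun _ => (1 : ℝ)) g μ) :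
    μ[(fun ω => A.indicator (fun _ => (1 : ℝ)) ω * g ω)|m]
      =ᵐ[μ] fun ω => (μ[A.indicator (fun _ => (1 : ℝ))|m]) ω * (μ[g|m]) ω := by
  have hFm : Measurable (A.indicator fun _ => (1 : ℝ)) := measurable_const.indicator hA
  have hFb : ∀ ω, ‖A.indicator (fun _ => (1 : ℝ)) ω‖ ≤ 1 := by
    intro ω; by_cases h : ω ∈ A <;> simp [h]
  have hFint : Integrable (A.indicator fun _ => (1 : ℝ)) μ := (integrable_const 1).indicator hA
  have hFg : Integrable (fun ω => A.indicator (fun _ => (1 : ℝ)) ω * g ω) μ :=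
    hg.bdd_mul hFm.aestronglyMeasurable (Filter.Eventually.of_forall hFb)
  -- conditional independence in terms of indicators
  have hFA : (A.indicator fun _ => (1 : ℝ)) ⁻¹' {(1 : ℝ)} = A := by
    ext ω; by_cases h : ω ∈ A <;> simp [h]
  have hind : ∀ t : Set ℝ, MeasurableSet t →
      (μ[(A ∩ g ⁻¹' t).indicator (fun _ => (1 : ℝ))|m]) =ᵐ[μ]
        fun ω => (μ[A.indicator (fun _ => (1 : ℝ))|m]) ω
          * (μ[(g ⁻¹' t).indicator (fun _ => (1 : ℝ))|m]) ω := by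
    intro t ht
    have h := ((condIndepFun_iff_condExp_inter_preimage_eq_mul hFm hgm).mp hindep)
      {(1 : ℝ)} t (measurableSet_singleton 1) ht
    rwa [hFA] at h
  -- core set-integral identity, proved by integration induction
  have core : ∀ s : Set Ω, MeasurableSet[m] s →
      ∫ ω, (s.indicator (fun _ => (1 : ℝ)) ω * (μ[A.indicator (fun _ => (1 : ℝ))|m]) ω) * g ω ∂μ
        = ∫ ω, (s.indicator (fun _ => (1 : ℝ)) ω * A.indicator (fun _ => (1 : ℝ)) ω) * g ω ∂μ := by
    intro s hs
    have hsΩ : MeasurableSet s := hm s hs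
    set q1 : Ω → ℝ := fun ω => s.indicator (fun _ => (1 : ℝ)) ω
      * (μ[A.indicator (fun _ => (1 : ℝ))|m]) ω with hq1def
    set q2 : Ω → ℝ := fun ω => s.indicator (fun _ => (1 : ℝ)) ω
      * A.indicator (fun _ => (1 : ℝ)) ω with hq2def
    have hsb : ∀ ω, ‖s.indicator (fun _ => (1 : ℝ)) ω‖ ≤ 1 := by
      intro ω; by_cases h : ω ∈ s <;> simp [h]
    have hq1m : StronglyMeasurable[m] q1 :=
      (stronglyMeasurable_const.indicator hs).mul stronglyMeasurable_condExp
    have hq1b : ∀ᵐ ω ∂μ, ‖q1 ω‖ ≤ 1 := by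
      filter_upwards [condexp_indicator_norm_le_one hm μ hA] with ω hω
      simp only [hq1def, norm_mul]
      exact mul_le_one₀ (hsb ω) (norm_nonneg _) hω
    have hq2m : AEStronglyMeasurable q2 μ :=
      ((measurable_const.indicator hsΩ).mul hFm).aestronglyMeasurable
    have hq2b : ∀ᵐ ω ∂μ, ‖q2 ω‖ ≤ 1 := by
      refine Filter.Eventually.of_forall fun ω => ?_
      simp only [hq2def, norm_mul]
      exact mul_le_one₀ (hsb ω) (norm_nonneg _) (hFb ω)
    have hsm : StronglyMeasurable[m] (s.indicator fun _ => (1 : ℝ)) :=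
      stronglyMeasurable_const.indicator hs
    clear_value q1 q2
    -- the σ-algebra generated by g
    have hmY : MeasurableSpace.comap g inferInstance ≤ mΩ' := measurable_iff_comap_le.mp hgm
    have hgY : StronglyMeasurable[MeasurableSpace.comap g inferInstance] g :=
      (measurable_iff_comap_le.mpr le_rfl).stronglyMeasurable
    have hgν : Integrable g (μ.trim hmY) := hg.trim hmY hgY
    -- induction
    have main : ∀ ⦃r : Ω → ℝ⦄, Integrable r (μ.trim hmY) →
        ∫ ω, q1 ω * r ω ∂μ = ∫ ω, q2 ω * r ω ∂μ := by
      refine @Integrable.induction Ω ℝ (MeasurableSpace.comap g inferInstance) _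
        (μ.trim hmY) (fun r => ∫ ω, q1 ω * r ω ∂μ = ∫ ω, q2 ω * r ω ∂μ) ?_ ?_ ?_ ?_
      · -- indicators of sets in σ(g)
        rintro c B hB -
        obtain ⟨t, ht, rfl⟩ := hB
        have hrw : ∀ q : Ω → ℝ, ∀ ω, q ω * (g ⁻¹' t).indicator (fun _ => c) ω
            = c * (q ω * (g ⁻¹' t).indicator (fun _ => (1 : ℝ)) ω) := by
          intro q ω; by_cases h : ω ∈ g ⁻¹' t <;> simp [h] <;> ring
        simp only [hrw, integral_const_mul]
        congr 1
        have hI : Integrable ((g ⁻¹' t).indicator fun _ => (1 : ℝ)) μ :=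
          (integrable_const 1).indicator (hgm ht)
        have hAI : Integrable ((A ∩ g ⁻¹' t).indicator fun _ => (1 : ℝ)) μ :=
          (integrable_const 1).indicator (hA.inter (hgm ht))
        calc ∫ ω, q1 ω * (g ⁻¹' t).indicator (fun _ => (1 : ℝ)) ω ∂μ
            = ∫ ω, q1 ω * (μ[(g ⁻¹' t).indicator (fun _ => (1 : ℝ))|m]) ω ∂μ :=
              (integral_mul_condexp_eq hm hq1m hq1b hI).symm
          _ = ∫ ω, s.indicator (fun _ => (1 : ℝ)) ω
                * ((μ[A.indicator (fun _ => (1 : ℝ))|m]) ω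
                  * (μ[(g ⁻¹' t).indicator (fun _ => (1 : ℝ))|m]) ω) ∂μ := by
              refine integral_congr_ae (Filter.Eventually.of_forall fun ω => ?_)
              simp only [hq1def]; ring
          _ = ∫ ω, s.indicator (fun _ => (1 : ℝ)) ω
                * (μ[(A ∩ g ⁻¹' t).indicator (fun _ => (1 : ℝ))|m]) ω ∂μ := by
              refine integral_congr_ae ?_
              filter_upwards [hind t ht] with ω hω
              rw [hω]
          _ = ∫ ω, s.indicator (fun _ => (1 : ℝ)) ω
                * (A ∩ g ⁻¹' t).indicator (fun _ => (1 : ℝ)) ω ∂μ :=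
              integral_mul_condexp_eq hm hsm
                (Filter.Eventually.of_forall hsb) hAI
          _ = ∫ ω, q2 ω * (g ⁻¹' t).indicator (fun _ => (1 : ℝ)) ω ∂μ := by
              refine integral_congr_ae (Filter.Eventually.of_forall fun ω => ?_)
              simp only [hq2def]
              by_cases h1 : ω ∈ A <;> by_cases h2 : ω ∈ g ⁻¹' t <;>
                simp [Set.indicator_apply, h1, h2]
      · -- additivity
        rintro r1 r2 - hr1 hr2 h1 h2
        have ir1 : Integrable r1 μ := integrable_of_integrable_trim hmY hr1
        have ir2 : Integrable r2 μ := integrable_of_integrable_trim hmY hr2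
        have i11 : Integrable (fun ω => q1 ω * r1 ω) μ :=
          ir1.bdd_mul (hq1m.mono hm).aestronglyMeasurable hq1b
        have i12 : Integrable (fun ω => q1 ω * r2 ω) μ :=
          ir2.bdd_mul (hq1m.mono hm).aestronglyMeasurable hq1b
        have i21 : Integrable (fun ω => q2 ω * r1 ω) μ := ir1.bdd_mul hq2m hq2b
        have i22 : Integrable (fun ω => q2 ω * r2 ω) μ := ir2.bdd_mul hq2m hq2b
        simp only [Pi.add_apply, mul_add]
        rw [integral_add i11 i12, integral_add i21 i22, h1, h2]
      · -- closedness in L¹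
        exact isClosed_eq
          (continuous_weighted_integral μ hmY (hq1m.mono hm).aestronglyMeasurable hq1b)
          (continuous_weighted_integral μ hmY hq2m hq2b)
      · -- stability under a.e. equality
        rintro r1 r2 h12 - h1
        have h12' : r1 =ᵐ[μ] r2 := ae_eq_of_ae_eq_trim h12
        have e1 : ∫ ω, q1 ω * r1 ω ∂μ = ∫ ω, q1 ω * r2 ω ∂μ := by
          refine integral_congr_ae ?_
          filter_upwards [h12'] with ω hω; rw [hω]
        have e2 : ∫ ω, q2 ω * r1 ω ∂μ = ∫ ω, q2 ω * r2 ω ∂μ := by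
          refine integral_congr_ae ?_
          filter_upwards [h12'] with ω hω; rw [hω]
        rw [← e1, ← e2]; exact h1
    simpa only [hq1def, hq2def] using main hgν
  -- conclude via the set-integral characterization of conditional expectation
  refine (ae_eq_condExp_of_forall_setIntegral_eq hm hFg ?_ ?_ ?_).symm
  · intro s _ _
    exact (integrable_condExp.bdd_mul
      (stronglyMeasurable_condExp.mono hm).aestronglyMeasurable
      (condexp_indicator_norm_le_one hm μ hA)).integrableOn
  · intro s hs _
    have hsΩ : MeasurableSet s := hm s hs
    have hsm : StronglyMeasurable[m] (s.indicator fun _ => (1 : ℝ)) :=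
      stronglyMeasurable_const.indicator hs
    have hsb : ∀ ω, ‖s.indicator (fun _ => (1 : ℝ)) ω‖ ≤ 1 := by
      intro ω; by_cases h : ω ∈ s <;> simp [h]
    have hq1m : StronglyMeasurable[m]
        (fun ω => s.indicator (fun _ => (1 : ℝ)) ω
          * (μ[A.indicator (fun _ => (1 : ℝ))|m]) ω) :=
      (stronglyMeasurable_const.indicator hs).mul stronglyMeasurable_condExp
    have hq1b : ∀ᵐ ω ∂μ, ‖s.indicator (fun _ => (1 : ℝ)) ω
        * (μ[A.indicator (fun _ => (1 : ℝ))|m]) ω‖ ≤ 1 := by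
      filter_upwards [condexp_indicator_norm_le_one hm μ hA] with ω hω
      rw [norm_mul]
      exact mul_le_one₀ (hsb ω) (norm_nonneg _) hω
    calc ∫ ω in s, (μ[A.indicator (fun _ => (1 : ℝ))|m]) ω * (μ[g|m]) ω ∂μ
        = ∫ ω, (s.indicator (fun _ => (1 : ℝ)) ω
            * (μ[A.indicator (fun _ => (1 : ℝ))|m]) ω) * (μ[g|m]) ω ∂μ := by
          rw [integral_eq_integral_indicator_one_mul hsΩ]
          exact integral_congr_ae (Filter.Eventually.of_forall fun ω => by ring)
      _ = ∫ ω, (s.indicator (fun _ => (1 : ℝ)) ω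
            * (μ[A.indicator (fun _ => (1 : ℝ))|m]) ω) * g ω ∂μ :=
          integral_mul_condexp_eq hm hq1m hq1b hg
      _ = ∫ ω, (s.indicator (fun _ => (1 : ℝ)) ω
            * A.indicator (fun _ => (1 : ℝ)) ω) * g ω ∂μ := core s hs
      _ = ∫ ω in s, A.indicator (fun _ => (1 : ℝ)) ω * g ω ∂μ := by
          rw [integral_eq_integral_indicator_one_mul hsΩ]
          exact integral_congr_ae (Filter.Eventually.of_forall fun ω => by ring)
  · exact (stronglyMeasurable_condExp.mul stronglyMeasurable_condExp).aestronglyMeasurable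

/-- The integral of the propensity-score ratio recovers the mean of `g`. -/
lemma aux_ratio {mX mΩ' : MeasurableSpace Ω} [StandardBorelSpace Ω]
    (hmX : mX ≤ mΩ') (μ : Measure Ω) [IsProbabilityMeasure μ]
    {A : Set Ω} (hA : MeasurableSet A) {g : Ω → ℝ} (hgm : Measurable g) (hg : Integrable g μ)
    {q : Ω → ℝ} (hq : q = μ[A.indicator (fun _ => (1 : ℝ))|mX])
    (hqpos : ∀ᵐ ω ∂μ, 0 < q ω)
    (hindep : CondIndepFun mX hmX (A.indicator fun _ => (1 : ℝ)) g μ) :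
    ∫ ω, ((μ[(fun ω' => A.indicator (fun _ => (1 : ℝ)) ω' * g ω')|
          MeasurableSpace.comap q inferInstance]) ω)
        / ((μ[A.indicator (fun _ => (1 : ℝ))|MeasurableSpace.comap q inferInstance]) ω) ∂μ
      = ∫ ω, g ω ∂μ := by
  have hqm : StronglyMeasurable[mX] q := hq ▸ stronglyMeasurable_condExp
  have hqint : Integrable q μ := hq ▸ integrable_condExp
  have hmPX : MeasurableSpace.comap q inferInstance ≤ mX :=
    measurable_iff_comap_le.mp hqm.measurable
  have hmP : MeasurableSpace.comap q inferInstance ≤ mΩ' := hmPX.trans hmX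
  have hqP : StronglyMeasurable[MeasurableSpace.comap q inferInstance] q :=
    (measurable_iff_comap_le.mpr le_rfl).stronglyMeasurable
  have hqb : ∀ᵐ ω ∂μ, ‖q ω‖ ≤ 1 := by
    rw [hq]; exact condexp_indicator_norm_le_one hmX μ hA
  -- the denominator equals q a.e.
  have hden : μ[A.indicator (fun _ => (1 : ℝ))|MeasurableSpace.comap q inferInstance]
      =ᵐ[μ] q := by
    have h1 := (condExp_condExp_of_le (μ := μ)
      (f := A.indicator fun _ => (1 : ℝ)) hmPX hmX).symm
    rw [← hq, condExp_of_stronglyMeasurable hmP hqP hqint] at h1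
    exact h1
  -- product formula at the level of mX
  have hprod : μ[(fun ω => A.indicator (fun _ => (1 : ℝ)) ω * g ω)|mX]
      =ᵐ[μ] fun ω => q ω * (μ[g|mX]) ω := by
    have h := condexp_indicator_mul_condIndep hmX μ hA hgm hg hindep
    rw [← hq] at h
    exact h
  -- the numerator
  have hnum : μ[(fun ω => A.indicator (fun _ => (1 : ℝ)) ω * g ω)|
      MeasurableSpace.comap q inferInstance]
      =ᵐ[μ] fun ω => q ω * (μ[g|MeasurableSpace.comap q inferInstance]) ω := by
    have h1 := (condExp_condExp_of_le (μ := μ)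
      (f := fun ω => A.indicator (fun _ => (1 : ℝ)) ω * g ω) hmPX hmX).symm
    have h2 := condExp_congr_ae (m := MeasurableSpace.comap q inferInstance) hprod
    have hqgint : Integrable (fun ω => q ω * (μ[g|mX]) ω) μ :=
      integrable_condExp.bdd_mul (hqm.mono hmX).aestronglyMeasurable hqb
    have h3 : μ[(fun ω => q ω * (μ[g|mX]) ω)|MeasurableSpace.comap q inferInstance]
        =ᵐ[μ] fun ω => q ω * (μ[(μ[g|mX])|MeasurableSpace.comap q inferInstance]) ω :=
      condExp_mul_of_stronglyMeasurable_left hqP hqgint integrable_condExp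
    have h4 : μ[(μ[g|mX])|MeasurableSpace.comap q inferInstance]
        =ᵐ[μ] μ[g|MeasurableSpace.comap q inferInstance] :=
      condExp_condExp_of_le hmPX hmX
    refine h1.trans (h2.trans (h3.trans ?_))
    filter_upwards [h4] with ω hω
    rw [hω]
  -- the ratio equals the conditional expectation of g a.e.
  have hratio : (fun ω =>
      ((μ[(fun ω' => A.indicator (fun _ => (1 : ℝ)) ω' * g ω')|
          MeasurableSpace.comap q inferInstance]) ω)
        / ((μ[A.indicator (fun _ => (1 : ℝ))|MeasurableSpace.comap q inferInstance]) ω))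
      =ᵐ[μ] μ[g|MeasurableSpace.comap q inferInstance] := by
    filter_upwards [hden, hnum, hqpos] with ω h1 h2 h3
    rw [h1, h2]
    exact mul_div_cancel_left₀ _ (ne_of_gt h3)
  rw [integral_congr_ae hratio, integral_condExp (μ := μ) (f := g) hmP]

end Key

/-- Under weak unconfoundedness and overlap, the average treatment effect
`τ(w,w') = E[Y(w') - Y(w)]` equals
`E[ E[Y^obs | W = w', p(w'|X)] ] - E[ E[Y^obs | W = w, p(w|X)] ]`, where the inner
conditional expectations given the event `W = v` and the score `p(v|X)` are the ratios
`E[1{W=v}·Y^obs | p(v|X)] / E[1{W=v} | p(v|X)]`. -/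
theorem ate_identification_gps {Ω E : Type*} [mΩ : MeasurableSpace Ω]
    [StandardBorelSpace Ω] [MeasurableSpace E]
    (μ : Measure Ω) [IsProbabilityMeasure μ] (T : ℕ)
    (W : Ω → Fin T) (X : Ω → E) (Y : Fin T → Ω → ℝ)
    (hW : Measurable W) (hX : Measurable X) (hY : ∀ w, Measurable (Y w))
    (hYint : ∀ w, Integrable (Y w) μ)
    (p : Fin T → Ω → ℝ)
    (hp : ∀ w, p w = μ[(fun ω => if W ω = w then (1 : ℝ) else 0) |
        MeasurableSpace.comap X inferInstance])
    (hoverlap : ∀ w, ∀ᵐ ω ∂μ, 0 < p w ω)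
    (hmX : MeasurableSpace.comap X inferInstance ≤ mΩ)
    (hweak : ∀ w : Fin T, CondIndepFun (MeasurableSpace.comap X inferInstance) hmX
        (fun ω => if W ω = w then (1 : ℝ) else 0) (Y w) μ)
    (w w' : Fin T) :
    ∫ ω, (Y w' ω - Y w ω) ∂μ
      = (∫ ω,
          ((μ[(fun ω' => (if W ω' = w' then (1 : ℝ) else 0) * Y (W ω') ω') |
              MeasurableSpace.comap (p w') inferInstance]) ω)
          / ((μ[(fun ω' => if W ω' = w' then (1 : ℝ) else 0) |
              MeasurableSpace.comap (p w') inferInstance]) ω) ∂μ)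
        - ∫ ω,
          ((μ[(fun ω' => (if W ω' = w then (1 : ℝ) else 0) * Y (W ω') ω') |
              MeasurableSpace.comap (p w) inferInstance]) ω)
          / ((μ[(fun ω' => if W ω' = w then (1 : ℝ) else 0) |
              MeasurableSpace.comap (p w) inferInstance]) ω) ∂μ := by
  have key : ∀ v : Fin T,
      (∫ ω,
          ((μ[(fun ω' => (if W ω' = v then (1 : ℝ) else 0) * Y (W ω') ω') |
              MeasurableSpace.comap (p v) inferInstance]) ω)
          / ((μ[(fun ω' => if W ω' = v then (1 : ℝ) else 0) |
              MeasurableSpace.comap (p v) inferInstance]) ω) ∂μ) = ∫ ω, Y v ω ∂μ := by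
    intro v
    have h1 : (fun ω' => if W ω' = v then (1 : ℝ) else 0)
        = (W ⁻¹' {v}).indicator (fun _ => (1 : ℝ)) := by
      funext ω; by_cases h : W ω = v <;> simp [Set.indicator_apply, h]
    have h2 : (fun ω' => (if W ω' = v then (1 : ℝ) else 0) * Y (W ω') ω')
        = fun ω' => (W ⁻¹' {v}).indicator (fun _ => (1 : ℝ)) ω' * Y v ω' := by
      funext ω; by_cases h : W ω = v <;> simp [Set.indicator_apply, h]
    rw [h1, h2]
    refine aux_ratio hmX μ (hW (measurableSet_singleton v)) (hY v) (hYint v)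
      ?_ (hoverlap v) ?_
    · rw [hp v, h1]
    · have h := hweak v
      rwa [h1] at h
  rw [integral_sub (hYint w') (hYint w), key w', key w]
end

section
/- Under weak unconfoundedness and overlap, E[Y(w)] admits the inverse-probability-weighting representation E[Y(w)] = E[ 1{W = w} · Y^obs / p(w|X) ]. -/
open MeasureTheory ProbabilityTheory

open Set in

lemma ipw_aux_integral_indicator_mul {Ω : Type*} [MeasurableSpace Ω]
    (P : Measure Ω) [IsProbabilityMeasure P] {s : Set Ω} (hs : MeasurableSet s)
    {g : Ω → ℝ} (hg : Measurable g)
    (hq : ∀ q : ℚ, P (s ∩ g ⁻¹' (Set.Iio (q : ℝ))) = P s * P (g ⁻¹' (Set.Iio (q : ℝ)))) :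
    ∫ ω, s.indicator g ω ∂P = (P s).toReal * ∫ ω, g ω ∂P := by
  have hmap : (P.restrict s).map g = (P s) • (P.map g) := by
    refine ext_of_generate_finite _ ((BorelSpace.measurable_eq (α := ℝ)).trans
      Real.borel_eq_generateFrom_Iio_rat) Real.isPiSystem_Iio_rat ?_ ?_
    · rintro t ht
      simp only [Set.mem_iUnion, Set.mem_singleton_iff] at ht
      obtain ⟨q, rfl⟩ := ht
      rw [Measure.map_apply hg measurableSet_Iio, Measure.smul_apply,
        Measure.map_apply hg measurableSet_Iio, Measure.restrict_apply (hg measurableSet_Iio),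
        Set.inter_comm, hq q, smul_eq_mul]
    · rw [Measure.map_apply hg MeasurableSet.univ, Measure.smul_apply,
        Measure.map_apply hg MeasurableSet.univ]
      simp [Measure.restrict_apply_univ, measure_univ]
  calc ∫ ω, s.indicator g ω ∂P = ∫ ω in s, g ω ∂P := integral_indicator hs
    _ = ∫ x, x ∂((P.restrict s).map g) :=
      (integral_map hg.aemeasurable aestronglyMeasurable_id).symm
    _ = ∫ x, x ∂((P s) • (P.map g)) := by rw [hmap]
    _ = (P s).toReal * ∫ x, x ∂(P.map g) := by rw [integral_smul_measure]; rfl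
    _ = (P s).toReal * ∫ ω, g ω ∂P := by
      rw [show (∫ x, x ∂(P.map g)) = ∫ x, id x ∂(P.map g) from rfl,
        integral_map hg.aemeasurable aestronglyMeasurable_id]
      rfl

open Set in
lemma ipw_aux_condexp_mul {Ω : Type*} {m : MeasurableSpace Ω} [mΩ : MeasurableSpace Ω]
    [StandardBorelSpace Ω]
    (μ : Measure Ω) [IsProbabilityMeasure μ] (hm : m ≤ mΩ)
    {s : Set Ω} (hs : MeasurableSet[mΩ] s) {g : Ω → ℝ} (hgm : Measurable[mΩ] g)
    (hgi : Integrable g μ)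
    (h : CondIndepFun m hm (s.indicator (fun _ => (1 : ℝ))) g μ) :
    μ[s.indicator g | m] =ᵐ[μ] fun ω => (μ⟦s | m⟧) ω * (μ[g | m]) ω := by
  have hIm : Measurable (s.indicator (fun _ => (1 : ℝ))) := measurable_const.indicator hs
  have hpre : (s.indicator (fun _ => (1 : ℝ))) ⁻¹' {1} = s := by
    ext ω; simp [Set.indicator_apply]
  have hiff := (condIndepFun_iff_condExp_inter_preimage_eq_mul (m' := m) (mΩ := mΩ) (hm' := hm) (μ := μ) hIm hgm).mp h
  have hq : ∀ᵐ ω ∂μ, ∀ q : ℚ,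
      condExpKernel μ m ω (s ∩ g ⁻¹' (Set.Iio (q : ℝ)))
        = condExpKernel μ m ω s * condExpKernel μ m ω (g ⁻¹' (Set.Iio (q : ℝ))) := by
    rw [ae_all_iff]
    intro q
    have h1 := hiff {1} (Set.Iio (q : ℝ)) (measurableSet_singleton _) measurableSet_Iio
    rw [hpre] at h1
    have h2 := condExpKernel_ae_eq_condExp (μ := μ) hm
      (s := s ∩ g ⁻¹' (Set.Iio (q : ℝ))) (hs.inter (hgm measurableSet_Iio))
    have h3 := condExpKernel_ae_eq_condExp (μ := μ) hm hs
    have h4 := condExpKernel_ae_eq_condExp (μ := μ) hm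
      (s := g ⁻¹' (Set.Iio (q : ℝ))) (hgm measurableSet_Iio)
    filter_upwards [h1, h2, h3, h4] with ω e1 e2 e3 e4
    have : (condExpKernel μ m ω (s ∩ g ⁻¹' (Set.Iio (q : ℝ)))).toReal
        = (condExpKernel μ m ω s * condExpKernel μ m ω (g ⁻¹' (Set.Iio (q : ℝ)))).toReal := by
      rw [ENNReal.toReal_mul, ← measureReal_def, ← measureReal_def, ← measureReal_def, e2, e3, e4]
      exact e1
    exact (ENNReal.toReal_eq_toReal_iff' (measure_ne_top _ _)
      (ENNReal.mul_ne_top (measure_ne_top _ _) (measure_ne_top _ _))).mp this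
  have hce1 : μ[s.indicator g | m] =ᵐ[μ] fun ω => ∫ y, s.indicator g y ∂condExpKernel μ m ω :=
    condExp_ae_eq_integral_condExpKernel hm (hgi.indicator hs)
  have hce2 : μ[g | m] =ᵐ[μ] fun ω => ∫ y, g y ∂condExpKernel μ m ω :=
    condExp_ae_eq_integral_condExpKernel hm hgi
  have hce3 : (fun ω => (condExpKernel μ m ω s).toReal) =ᵐ[μ] μ⟦s | m⟧ :=
    condExpKernel_ae_eq_condExp hm hs
  filter_upwards [hq, hce1, hce2, hce3] with ω h1 h3 h4 h5
  rw [h3, ipw_aux_integral_indicator_mul (condExpKernel μ m ω) hs hgm h1, h5, ← h4]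

open Set in
lemma ipw_aux_integrable {Ω : Type*} {m : MeasurableSpace Ω} [mΩ : MeasurableSpace Ω]
    [StandardBorelSpace Ω]
    (μ : Measure Ω) [IsProbabilityMeasure μ] (hm : m ≤ mΩ)
    {s : Set Ω} (hs : MeasurableSet[mΩ] s) {g q : Ω → ℝ} (hgm : Measurable[mΩ] g)
    (hgi : Integrable g μ)
    (hqdef : q = μ[s.indicator (fun _ => (1 : ℝ)) | m])
    (hqpos : ∀ᵐ ω ∂μ, 0 < q ω)
    (key : μ[s.indicator (fun ω => |g ω|) | m]
      =ᵐ[μ] fun ω => q ω * (μ[(fun ω => |g ω|) | m]) ω) :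
    Integrable (fun ω => (q ω)⁻¹ * s.indicator g ω) μ := by
  have hqm : StronglyMeasurable[m] q := hqdef ▸ stronglyMeasurable_condExp
  have hqΩ : Measurable[mΩ] q := (hqm.measurable).mono hm le_rfl
  set G : Ω → ℝ := s.indicator (fun x => |g x|) with hG
  have hGm : Measurable[mΩ] G := hgm.abs.indicator hs
  have hGi : Integrable G μ := hgi.abs.indicator hs
  have hGnn : ∀ ω, 0 ≤ G ω := fun ω => Set.indicator_nonneg (fun x _ => abs_nonneg _) ω
  set φ : ℕ → Ω → ℝ := fun n ω => min (max ((q ω)⁻¹) 0) (n : ℝ) with hφ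
  have hφm : ∀ n, StronglyMeasurable[m] (φ n) :=
    fun n => ((hqm.measurable.inv.max measurable_const).min measurable_const).stronglyMeasurable
  have hφnn : ∀ n ω, 0 ≤ φ n ω := fun n ω => le_min (le_max_right _ _) (Nat.cast_nonneg n)
  have hφle : ∀ n ω, φ n ω ≤ (n : ℝ) := fun n ω => min_le_right _ _
  have hn_int : ∀ n, Integrable (fun ω => φ n ω * G ω) μ := by
    intro n
    refine Integrable.bdd_mul (c := n) hGi ((hφm n).measurable.mono hm le_rfl).aestronglyMeasurable ?_
    exact ae_of_all _ fun ω => by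
      rw [Real.norm_eq_abs, abs_of_nonneg (hφnn n ω)]; exact hφle n ω
  have hce : ∀ n, μ[fun ω => φ n ω * G ω | m] =ᵐ[μ] fun ω => φ n ω * (μ[G | m]) ω := by
    intro n
    exact condExp_mul_of_stronglyMeasurable_left (hφm n) (hn_int n) hGi
  have habs_nn : (0 : Ω → ℝ) ≤ᵐ[μ] fun ω => |g ω| := ae_of_all _ fun ω => abs_nonneg _
  have hcnn : ∀ᵐ ω ∂μ, 0 ≤ (μ[(fun ω => |g ω|) | m]) ω := condExp_nonneg habs_nn
  have hbound : ∀ n, ∀ᵐ ω ∂μ,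
      (μ[fun ω => φ n ω * G ω | m]) ω ≤ (μ[(fun ω => |g ω|) | m]) ω := by
    intro n
    filter_upwards [hce n, key, hqpos, hcnn] with ω e1 e2 e3 e4
    rw [e1, e2]
    have hφq : φ n ω * q ω ≤ 1 := by
      have h1 : φ n ω ≤ (q ω)⁻¹ := by
        refine (min_le_left _ _).trans ?_
        rw [max_eq_left (inv_nonneg.mpr e3.le)]
      calc φ n ω * q ω ≤ (q ω)⁻¹ * q ω := mul_le_mul_of_nonneg_right h1 e3.le
        _ = 1 := inv_mul_cancel₀ (ne_of_gt e3)
    calc φ n ω * (q ω * (μ[(fun ω => |g ω|) | m]) ω)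
        = (φ n ω * q ω) * (μ[(fun ω => |g ω|) | m]) ω := by ring
      _ ≤ 1 * (μ[(fun ω => |g ω|) | m]) ω := mul_le_mul_of_nonneg_right hφq e4
      _ = (μ[(fun ω => |g ω|) | m]) ω := one_mul _
  have hSF : SigmaFinite (μ.trim hm) := by
    have : IsFiniteMeasure (μ.trim hm) := isFiniteMeasure_trim hm
    infer_instance
  have hint_bound : ∀ n, ∫ ω, φ n ω * G ω ∂μ ≤ ∫ ω, |g ω| ∂μ := by
    intro n
    calc ∫ ω, φ n ω * G ω ∂μ = ∫ ω, (μ[fun ω => φ n ω * G ω | m]) ω ∂μ :=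
        (integral_condExp hm).symm
      _ ≤ ∫ ω, (μ[(fun ω => |g ω|) | m]) ω ∂μ :=
        integral_mono_ae integrable_condExp integrable_condExp (hbound n)
      _ = ∫ ω, |g ω| ∂μ := integral_condExp hm
  refine ⟨((hqΩ.inv).mul (hgm.indicator hs)).aestronglyMeasurable, ?_⟩
  rw [hasFiniteIntegral_iff_norm]
  set F : ℕ → Ω → ENNReal := fun n ω => ENNReal.ofReal (φ n ω * G ω) with hF
  have hFmono : ∀ ω, Monotone fun n => F n ω := by
    intro ω a b hab
    exact ENNReal.ofReal_le_ofReal (mul_le_mul_of_nonneg_right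
      (min_le_min le_rfl (Nat.cast_le.mpr hab)) (hGnn ω))
  have hFae : ∀ᵐ ω ∂μ, ENNReal.ofReal ‖(q ω)⁻¹ * s.indicator g ω‖ = ⨆ n, F n ω := by
    filter_upwards [hqpos] with ω hq0
    have hqinv : (0 : ℝ) ≤ (q ω)⁻¹ := inv_nonneg.mpr hq0.le
    have hnorm : ‖(q ω)⁻¹ * s.indicator g ω‖ = (q ω)⁻¹ * G ω := by
      rw [Real.norm_eq_abs, abs_mul, abs_of_nonneg hqinv, hG]
      congr 1
      by_cases hω : ω ∈ s
      · simp [Set.indicator_of_mem hω]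
      · simp [Set.indicator_of_notMem hω]
    rw [hnorm]
    have hφeq : ∀ n, φ n ω = min ((q ω)⁻¹) (n : ℝ) := by
      intro n; rw [hφ]; simp [max_eq_left hqinv]
    refine le_antisymm ?_ ?_
    · refine le_iSup_of_le ⌈(q ω)⁻¹⌉₊ ?_
      rw [hF]
      simp only
      rw [hφeq, min_eq_left (Nat.le_ceil _)]
    · refine iSup_le fun n => ?_
      refine ENNReal.ofReal_le_ofReal ?_
      refine mul_le_mul_of_nonneg_right ?_ (hGnn ω)
      rw [hφeq]; exact min_le_left _ _
  rw [lintegral_congr_ae hFae]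
  rw [lintegral_iSup' (f := F) (fun n =>
      ((((hφm n).measurable.mono hm le_rfl).mul hGm).ennreal_ofReal).aemeasurable)
    (ae_of_all _ hFmono)]
  have hlast : ∀ n, ∫⁻ ω, F n ω ∂μ ≤ ENNReal.ofReal (∫ ω, |g ω| ∂μ) := by
    intro n
    rw [hF]
    simp only
    rw [← ofReal_integral_eq_lintegral_ofReal (hn_int n)
      (ae_of_all _ fun ω => mul_nonneg (hφnn n ω) (hGnn ω))]
    exact ENNReal.ofReal_le_ofReal (hint_bound n)
  exact lt_of_le_of_lt (iSup_le hlast) ENNReal.ofReal_lt_top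

/-- Under weak unconfoundedness and overlap, the inverse-probability-weighting
representation holds: `E[Y(w)] = E[ 1{W = w} · Y^obs / p(w|X) ]`. -/
theorem ipw_identification {Ω E : Type*} [mΩ : MeasurableSpace Ω]
    [StandardBorelSpace Ω] [MeasurableSpace E]
    (μ : Measure Ω) [IsProbabilityMeasure μ] (T : ℕ)
    (W : Ω → Fin T) (X : Ω → E) (Y : Fin T → Ω → ℝ)
    (hW : Measurable W) (hX : Measurable X) (hY : ∀ w, Measurable (Y w))
    (hYint : ∀ w, Integrable (Y w) μ)
    (p : Fin T → Ω → ℝ)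
    (hp : ∀ w, p w = μ[(fun ω => if W ω = w then (1 : ℝ) else 0) |
        MeasurableSpace.comap X inferInstance])
    (hoverlap : ∀ w, ∀ᵐ ω ∂μ, 0 < p w ω)
    (hmX : MeasurableSpace.comap X inferInstance ≤ mΩ)
    (hweak : ∀ w : Fin T, CondIndepFun (MeasurableSpace.comap X inferInstance) hmX
        (fun ω => if W ω = w then (1 : ℝ) else 0) (Y w) μ)
    (w : Fin T) :
    ∫ ω, Y w ω ∂μ
      = ∫ ω, (if W ω = w then (1 : ℝ) else 0) * Y (W ω) ω / p w ω ∂μ := by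
  set s : Set Ω := W ⁻¹' {w} with hs_def
  have hs : MeasurableSet[mΩ] s := hW (measurableSet_singleton w)
  have hI : (fun ω => if W ω = w then (1 : ℝ) else 0) = s.indicator (fun _ => 1) := by
    funext ω
    by_cases h : W ω = w <;> simp [Set.indicator_apply, hs_def, h]
  -- conditional independence in indicator form
  have hweak' : CondIndepFun (MeasurableSpace.comap X inferInstance) hmX (s.indicator fun _ => (1 : ℝ)) (Y w) μ := by
    rw [← hI]; exact hweak w
  have hweakAbs : CondIndepFun (MeasurableSpace.comap X inferInstance) hmX (s.indicator fun _ => (1 : ℝ))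
      (fun ω => |Y w ω|) μ := by
    rw [← hI]
    exact (hweak w).comp measurable_id measurable_abs
  have hp' : p w = μ[s.indicator (fun _ => (1 : ℝ)) | MeasurableSpace.comap X inferInstance] := by
    rw [hp w, hI]
  -- product rule for conditional expectations
  have key : μ[s.indicator (Y w) | MeasurableSpace.comap X inferInstance]
      =ᵐ[μ] fun ω => p w ω * (μ[Y w | MeasurableSpace.comap X inferInstance]) ω := by
    filter_upwards [ipw_aux_condexp_mul μ hmX hs (hY w) (hYint w) hweak'] with ω hω
    rw [hω, hp']
  have keyAbs : μ[s.indicator (fun ω => |Y w ω|) | MeasurableSpace.comap X inferInstance]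
      =ᵐ[μ] fun ω => p w ω * (μ[(fun ω => |Y w ω|) | MeasurableSpace.comap X inferInstance]) ω := by
    filter_upwards [ipw_aux_condexp_mul μ hmX hs (hY w).abs (hYint w).abs hweakAbs] with ω hω
    rw [hω, hp']
  -- integrability of the IPW integrand
  have hint : Integrable (fun ω => (p w ω)⁻¹ * s.indicator (Y w) ω) μ :=
    ipw_aux_integrable μ hmX hs (hY w) (hYint w) hp' (hoverlap w) keyAbs
  have hindint : Integrable (s.indicator (Y w)) μ := (hYint w).indicator hs
  have hpinv_m : StronglyMeasurable[MeasurableSpace.comap X inferInstance] (fun ω => (p w ω)⁻¹) := by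
    have : StronglyMeasurable[MeasurableSpace.comap X inferInstance] (p w) := hp' ▸ stronglyMeasurable_condExp
    exact this.measurable.inv.stronglyMeasurable
  have hmul : μ[(fun ω => (p w ω)⁻¹) * s.indicator (Y w) | MeasurableSpace.comap X inferInstance]
      =ᵐ[μ] (fun ω => (p w ω)⁻¹) * μ[s.indicator (Y w) | MeasurableSpace.comap X inferInstance] :=
    condExp_mul_of_stronglyMeasurable_left hpinv_m hint hindint
  have hSF : SigmaFinite (μ.trim hmX) := by
    have : IsFiniteMeasure (μ.trim hmX) := isFiniteMeasure_trim hmX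
    infer_instance
  have hcond : μ[(fun ω => (p w ω)⁻¹ * s.indicator (Y w) ω) | MeasurableSpace.comap X inferInstance] =ᵐ[μ] μ[Y w | MeasurableSpace.comap X inferInstance] := by
    have h0 : (fun ω => (p w ω)⁻¹ * s.indicator (Y w) ω)
        = (fun ω => (p w ω)⁻¹) * s.indicator (Y w) := rfl
    rw [h0]
    filter_upwards [hmul, key, hoverlap w] with ω e1 e2 e3
    have : (μ[(fun ω => (p w ω)⁻¹) * s.indicator (Y w) | MeasurableSpace.comap X inferInstance]) ω
        = (p w ω)⁻¹ * (μ[s.indicator (Y w) | MeasurableSpace.comap X inferInstance]) ω := e1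
    rw [this, e2, ← mul_assoc, inv_mul_cancel₀ (ne_of_gt e3), one_mul]
  calc ∫ ω, Y w ω ∂μ = ∫ ω, (μ[Y w | MeasurableSpace.comap X inferInstance]) ω ∂μ := (integral_condExp hmX).symm
    _ = ∫ ω, (μ[(fun ω => (p w ω)⁻¹ * s.indicator (Y w) ω) | MeasurableSpace.comap X inferInstance]) ω ∂μ :=
      integral_congr_ae hcond.symm
    _ = ∫ ω, (p w ω)⁻¹ * s.indicator (Y w) ω ∂μ := integral_condExp hmX
    _ = ∫ ω, (if W ω = w then (1 : ℝ) else 0) * Y (W ω) ω / p w ω ∂μ := by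
      congr 1
      funext ω
      by_cases hω : W ω = w
      · have : ω ∈ s := by simp [hs_def, hω]
        simp [Set.indicator_of_mem this, hω, div_eq_mul_inv, mul_comm]
      · have : ω ∉ s := by simp [hs_def, hω]
        simp [Set.indicator_of_notMem this, hω]
end

section
/- Pairwise comparison estimands need not be transitive: there exists a probability space with treatment W ∈ {1,2,3} and potential outcomes Y(1), Y(2), Y(3) such that E[Y(2)−Y(1) | W ∈ {1,2}] + E[Y(3)−Y(2) | W ∈ {2,3}] + E[Y(1)−Y(3) | W ∈ {1,3}] ≠ 0, while the unconditional effects always satisfy τ(1,2) + τ(2,3) + τ(3,1) = 0. -/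
open MeasureTheory ProbabilityTheory

noncomputable def myμ : Measure (Fin 3) :=
  (3 : ENNReal)⁻¹ • (Measure.dirac 0 + Measure.dirac 1 + Measure.dirac 2)

instance : IsProbabilityMeasure myμ := by
  constructor
  simp [myμ, Measure.add_apply]
  have : ((3:ENNReal))⁻¹ + 3⁻¹ + 3⁻¹ = 3 * 3⁻¹ := by ring
  rw [this, ENNReal.mul_inv_cancel (by norm_num) (by norm_num)]

lemma intadd (f : Fin 3 → ℝ) (μ ν : Measure (Fin 3)) [IsFiniteMeasure μ] [IsFiniteMeasure ν] :
    ∫ x, f x ∂(μ + ν) = ∫ x, f x ∂μ + ∫ x, f x ∂ν :=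
  integral_add_measure .of_finite .of_finite

noncomputable def myY : Fin 3 → Fin 3 → ℝ := fun w ω => if w = 1 ∧ ω = 0 then (1:ℝ) else 0

/-- Pairwise comparison estimands need not be transitive: there is a
probability space with `W ∈ {1,2,3}` (here `Fin 3`) and potential outcomes such that the
cyclic sum of pairwise-restricted estimands `E[Y(w')-Y(w) | W ∈ {w,w'}]` is nonzero,
whereas the cyclic sum of the unconditional effects `τ(w,w') = E[Y(w')-Y(w)]` is always
zero. -/
theorem pairwise_estimands_not_transitive :
    (∃ (Ω : Type) (_ : MeasurableSpace Ω) (μ : Measure Ω) (_ : IsProbabilityMeasure μ)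
        (W : Ω → Fin 3) (Y : Fin 3 → Ω → ℝ),
      Measurable W ∧ (∀ w, Integrable (Y w) μ) ∧
      (∀ w w' : Fin 3, w ≠ w' → 0 < μ {ω | W ω = w ∨ W ω = w'}) ∧
      (∫ ω, (Y 1 ω - Y 0 ω) ∂(μ[|{ω | W ω = 0 ∨ W ω = 1}])
        + ∫ ω, (Y 2 ω - Y 1 ω) ∂(μ[|{ω | W ω = 1 ∨ W ω = 2}])
        + ∫ ω, (Y 0 ω - Y 2 ω) ∂(μ[|{ω | W ω = 0 ∨ W ω = 2}]) ≠ 0))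
    ∧ (∀ (Ω : Type) (_ : MeasurableSpace Ω) (μ : Measure Ω), IsProbabilityMeasure μ →
        ∀ Y : Fin 3 → Ω → ℝ, (∀ w, Integrable (Y w) μ) →
        ∫ ω, (Y 1 ω - Y 0 ω) ∂μ + ∫ ω, (Y 2 ω - Y 1 ω) ∂μ
          + ∫ ω, (Y 0 ω - Y 2 ω) ∂μ = 0) := by
  constructor
  · refine ⟨Fin 3, inferInstance, myμ, ?_, id, myY, measurable_id, fun w => .of_finite,
      ?_, ?_⟩
    · infer_instance
    · intro w w' hww'
      fin_cases w <;> fin_cases w' <;>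
        simp_all [myμ, Measure.add_apply, Measure.dirac_apply, Set.indicator]
    · unfold ProbabilityTheory.cond
      simp only [myμ, id, Measure.restrict_add, Measure.restrict_smul, restrict_dirac,
        Measure.add_apply, Measure.smul_apply, Measure.dirac_apply, Set.indicator,
        integral_smul_measure]
      simp only [Set.mem_setOf_eq, show (0:Fin 3) ≠ 1 by decide, show (0:Fin 3) ≠ 2 by decide,
        show (1:Fin 3) ≠ 0 by decide, show (1:Fin 3) ≠ 2 by decide, show (2:Fin 3) ≠ 0 by decide,
        show (2:Fin 3) ≠ 1 by decide, if_true, if_false, eq_self_iff_true, true_or, or_true,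
        false_or, or_false, if_neg, ite_true, ite_false, add_zero, zero_add, intadd,
        integral_dirac, myY, Pi.one_apply]
      norm_num [smul_eq_mul, ENNReal.mul_inv, ENNReal.toReal_mul, ENNReal.toReal_inv]
  · intro Ω _ μ _ Y hY
    rw [integral_sub (hY 1) (hY 0), integral_sub (hY 2) (hY 1), integral_sub (hY 0) (hY 2)]
    ring
end

section
/- If 1{W = w} ⟂⟂ Y(w) | X for each w, and b_w(X) is any function of X such that P(W = w | X) = P(W = w | b_w(X)) almost surely (i.e., b_w is a balancing score for level w), then 1{W = w} ⟂⟂ Y(w) | b_w(X). -/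
open MeasureTheory ProbabilityTheory

/-- Auxiliary: if `f ⟂⟂ g` given `m2`, `m1 ≤ m2`, and all conditional probabilities
of preimages of `f` given `m2` coincide a.e. with those given `m1`, then `f ⟂⟂ g` given `m1`. -/
lemma aux_coarsen_condIndepFun {Ω : Type*} {m1 m2 : MeasurableSpace Ω}
    [mΩ : MeasurableSpace Ω] [StandardBorelSpace Ω]
    {μ : Measure Ω} [IsProbabilityMeasure μ]
    (h12 : m1 ≤ m2) (h2 : m2 ≤ mΩ) (h1 : m1 ≤ mΩ)
    {f g : Ω → ℝ} (hf : Measurable f) (hg : Measurable g)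
    (hbal : ∀ s : Set ℝ, MeasurableSet s → (μ⟦f ⁻¹' s | m2⟧) =ᵐ[μ] (μ⟦f ⁻¹' s | m1⟧))
    (hind : CondIndepFun m2 h2 f g μ) : CondIndepFun m1 h1 f g μ := by
  rw [condIndepFun_iff_condExp_inter_preimage_eq_mul hf hg] at hind ⊢
  intro s t hs ht
  have tower1 : (μ⟦f ⁻¹' s ∩ g ⁻¹' t | m1⟧)
      =ᵐ[μ] μ[(μ⟦f ⁻¹' s ∩ g ⁻¹' t | m2⟧) | m1] :=
    (condExp_condExp_of_le h12 h2).symm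
  have step2 : μ[(μ⟦f ⁻¹' s ∩ g ⁻¹' t | m2⟧) | m1]
      =ᵐ[μ] μ[(fun ω => (μ⟦f ⁻¹' s | m1⟧) ω * (μ⟦g ⁻¹' t | m2⟧) ω) | m1] := by
    refine condExp_congr_ae ((hind s t hs ht).trans ?_)
    filter_upwards [hbal s hs] with ω hω
    rw [hω]
  have hbound : ∀ᵐ ω ∂μ, ‖(μ⟦f ⁻¹' s | m1⟧) ω‖ ≤ 1 := by
    have hintind : Integrable (Set.indicator (f ⁻¹' s) (fun _ => (1:ℝ))) μ :=
      (integrable_const (1:ℝ)).indicator (hf hs)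
    have hnn : 0 ≤ᵐ[μ] (μ⟦f ⁻¹' s | m1⟧) :=
      condExp_nonneg (Filter.Eventually.of_forall fun ω =>
        Set.indicator_nonneg (fun _ _ => zero_le_one) ω)
    have hub : (μ⟦f ⁻¹' s | m1⟧) ≤ᵐ[μ] μ[(fun _ => (1:ℝ)) | m1] :=
      condExp_mono hintind (integrable_const 1)
        (Filter.Eventually.of_forall fun ω =>
          Set.indicator_le_self' (fun _ _ => zero_le_one) ω)
    rw [condExp_const h1 (1:ℝ)] at hub
    filter_upwards [hnn, hub] with ω hω1 hω2
    rw [Real.norm_eq_abs, abs_of_nonneg hω1]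
    exact hω2
  have step3 : μ[(fun ω => (μ⟦f ⁻¹' s | m1⟧) ω * (μ⟦g ⁻¹' t | m2⟧) ω) | m1]
      =ᵐ[μ] fun ω => (μ⟦f ⁻¹' s | m1⟧) ω * (μ[(μ⟦g ⁻¹' t | m2⟧) | m1]) ω :=
    condExp_stronglyMeasurable_mul_of_bound h1
      (stronglyMeasurable_condExp (m := m1)) (integrable_condExp (m := m2)) 1 hbound
  have tower2 : μ[(μ⟦g ⁻¹' t | m2⟧) | m1] =ᵐ[μ] (μ⟦g ⁻¹' t | m1⟧) :=
    condExp_condExp_of_le h12 h2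
  refine tower1.trans (step2.trans (step3.trans ?_))
  filter_upwards [tower2] with ω hω
  rw [hω]

/-- If `1{W = w} ⟂⟂ Y(w) | X` and `b_w` is a balancing score for level `w`,
i.e. `P(W = w | X) = P(W = w | b_w(X))` a.s., then `1{W = w} ⟂⟂ Y(w) | b_w(X)`. -/
theorem balancing_score_weak_unconf {Ω E F : Type*} [mΩ : MeasurableSpace Ω]
    [StandardBorelSpace Ω] [MeasurableSpace E] [MeasurableSpace F]
    (μ : Measure Ω) [IsProbabilityMeasure μ] (T : ℕ)
    (W : Ω → Fin T) (X : Ω → E) (Y : Fin T → Ω → ℝ)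
    (hW : Measurable W) (hX : Measurable X) (hY : ∀ w, Measurable (Y w))
    (b : Fin T → E → F) (hb : ∀ w, Measurable (b w))
    (hmX : MeasurableSpace.comap X inferInstance ≤ mΩ)
    (hmb : ∀ w : Fin T,
      MeasurableSpace.comap (fun ω => b w (X ω)) inferInstance ≤ mΩ)
    (hbal : ∀ w : Fin T,
      μ[(fun ω => if W ω = w then (1 : ℝ) else 0) | MeasurableSpace.comap X inferInstance]
        =ᵐ[μ] μ[(fun ω => if W ω = w then (1 : ℝ) else 0) |
            MeasurableSpace.comap (fun ω => b w (X ω)) inferInstance])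
    (hweak : ∀ w : Fin T, CondIndepFun (MeasurableSpace.comap X inferInstance) hmX
        (fun ω => if W ω = w then (1 : ℝ) else 0) (Y w) μ) :
    ∀ w : Fin T, CondIndepFun (MeasurableSpace.comap (fun ω => b w (X ω)) inferInstance) (hmb w)
        (fun ω => if W ω = w then (1 : ℝ) else 0) (Y w) μ := by
  intro w
  classical
  have hle : MeasurableSpace.comap (fun ω => b w (X ω)) inferInstance
      ≤ MeasurableSpace.comap X inferInstance := by
    have h : (fun ω => b w (X ω)) = (b w) ∘ X := rfl
    rw [h, ← MeasurableSpace.comap_comp]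
    exact MeasurableSpace.comap_mono (hb w).comap_le
  have hI : Measurable (fun ω => if W ω = w then (1 : ℝ) else 0) :=
    Measurable.ite (hW (measurableSet_singleton w)) measurable_const measurable_const
  refine aux_coarsen_condIndepFun hle hmX (hmb w) hI (hY w) ?_ (hweak w)
  intro s hs
  by_cases h1 : (1 : ℝ) ∈ s <;> by_cases h0 : (0 : ℝ) ∈ s
  · have hset : Set.indicator ((fun ω => if W ω = w then (1 : ℝ) else 0) ⁻¹' s)
        (fun _ => (1:ℝ)) = fun _ => (1:ℝ) := by
      funext ω
      rw [Set.indicator_apply]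
      by_cases h : W ω = w <;> simp [h, h1, h0]
    rw [hset]
    rw [condExp_const (μ := μ) hmX (1:ℝ), condExp_const (μ := μ) (hmb w) (1:ℝ)]
  · have hset : Set.indicator ((fun ω => if W ω = w then (1 : ℝ) else 0) ⁻¹' s)
        (fun _ => (1:ℝ)) = fun ω => if W ω = w then (1 : ℝ) else 0 := by
      funext ω
      rw [Set.indicator_apply]
      by_cases h : W ω = w <;> simp [h, h1, h0]
    rw [hset]
    exact hbal w
  · have hset : Set.indicator ((fun ω => if W ω = w then (1 : ℝ) else 0) ⁻¹' s)
        (fun _ => (1:ℝ)) = fun ω => 1 - (if W ω = w then (1 : ℝ) else 0) := by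
      funext ω
      rw [Set.indicator_apply]
      by_cases h : W ω = w <;> simp [h, h1, h0]
    rw [hset]
    have hint : Integrable (fun ω => if W ω = w then (1 : ℝ) else 0) μ := by
      have h : (fun ω => if W ω = w then (1 : ℝ) else 0)
          = Set.indicator (W ⁻¹' {w}) (fun _ => (1:ℝ)) := by
        funext ω; by_cases h : W ω = w <;> simp [h]
      rw [h]
      exact (integrable_const (1:ℝ)).indicator (hW (measurableSet_singleton w))
    have e1 : (μ[(fun ω => 1 - (if W ω = w then (1 : ℝ) else 0)) |
        MeasurableSpace.comap X inferInstance])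
        =ᵐ[μ] fun ω => 1 - (μ[(fun ω => if W ω = w then (1 : ℝ) else 0) |
          MeasurableSpace.comap X inferInstance]) ω := by
      have h := condExp_sub (m := MeasurableSpace.comap X inferInstance) (μ := μ)
        (integrable_const (1:ℝ)) hint
      refine h.trans ?_
      rw [condExp_const (μ := μ) hmX (1:ℝ)]
      exact Filter.EventuallyEq.rfl
    have e2 : (μ[(fun ω => 1 - (if W ω = w then (1 : ℝ) else 0)) |
        MeasurableSpace.comap (fun ω => b w (X ω)) inferInstance])
        =ᵐ[μ] fun ω => 1 - (μ[(fun ω => if W ω = w then (1 : ℝ) else 0) |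
          MeasurableSpace.comap (fun ω => b w (X ω)) inferInstance]) ω := by
      have h := condExp_sub (m := MeasurableSpace.comap (fun ω => b w (X ω)) inferInstance)
        (μ := μ) (integrable_const (1:ℝ)) hint
      refine h.trans ?_
      rw [condExp_const (μ := μ) (hmb w) (1:ℝ)]
      exact Filter.EventuallyEq.rfl
    refine e1.trans (Filter.EventuallyEq.trans ?_ e2.symm)
    filter_upwards [hbal w] with ω hω
    rw [hω]
  · have hset : Set.indicator ((fun ω => if W ω = w then (1 : ℝ) else 0) ⁻¹' s)
        (fun _ => (1:ℝ)) = fun _ => (0:ℝ) := by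
      funext ω
      rw [Set.indicator_apply]
      by_cases h : W ω = w <;> simp [h, h1, h0]
    rw [hset]
    rw [condExp_const (μ := μ) hmX (0:ℝ), condExp_const (μ := μ) (hmb w) (0:ℝ)]
end

section
/- Under strong unconfoundedness and overlap, the conditional average treatment effect is identified given the full propensity score vector: E[Y(w') − Y(w) | p(1|X),...,p(T−1|X)] = E[Y^obs | W = w', p(1|X),...,p(T−1|X)] − E[Y^obs | W = w, p(1|X),...,p(T−1|X)] almost surely. -/
open MeasureTheory ProbabilityTheory

private lemma cate_aux {Ω E : Type*} [mΩ : MeasurableSpace Ω]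
    [StandardBorelSpace Ω] [MeasurableSpace E]
    (μ : Measure Ω) [IsProbabilityMeasure μ] (T : ℕ)
    (W : Ω → Fin (T + 1)) (X : Ω → E) (Y : Fin (T + 1) → Ω → ℝ)
    (hW : Measurable W) (hY : ∀ w, Measurable (Y w))
    (hYint : ∀ w, Integrable (Y w) μ)
    (p : Fin (T + 1) → Ω → ℝ)
    (hp : ∀ w, p w = μ[(fun ω => if W ω = w then (1 : ℝ) else 0) | (MeasurableSpace.comap X inferInstance)])
    (hoverlap : ∀ w, ∀ᵐ ω ∂μ, 0 < p w ω)
    (hmX : (MeasurableSpace.comap X inferInstance) ≤ mΩ)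
    (hstrong : CondIndepFun (MeasurableSpace.comap X inferInstance) hmX W (fun ω (w : Fin (T + 1)) => Y w ω) μ)
    (v : Fin (T + 1)) :
    (fun ω =>
        ((μ[(fun ω' => (if W ω' = v then (1 : ℝ) else 0) * Y (W ω') ω') | (MeasurableSpace.comap (fun ω (u : Fin T) => p u.castSucc ω) inferInstance)]) ω)
          / ((μ[(fun ω' => if W ω' = v then (1 : ℝ) else 0) | (MeasurableSpace.comap (fun ω (u : Fin T) => p u.castSucc ω) inferInstance)]) ω))
      =ᵐ[μ] μ[Y v | (MeasurableSpace.comap (fun ω (u : Fin T) => p u.castSucc ω) inferInstance)] := by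
  -- basic measurability facts
  have hIint : ∀ u : Fin (T + 1),
      Integrable (fun ω => if W ω = u then (1 : ℝ) else 0) μ := by
    intro u
    have hind : (fun ω => if W ω = u then (1 : ℝ) else 0)
        = (W ⁻¹' {u}).indicator (fun _ => (1 : ℝ)) := by
      funext ω; by_cases h : W ω = u <;> simp [h]
    rw [hind]
    exact (integrable_const (1 : ℝ)).indicator (hW (measurableSet_singleton u))
  have hcoord : ∀ u : Fin T, Measurable[(MeasurableSpace.comap X inferInstance)] (p u.castSucc) := by
    intro u
    rw [hp u.castSucc]
    exact stronglyMeasurable_condExp.measurable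
  have hSmX : Measurable[(MeasurableSpace.comap X inferInstance)] (fun ω (u : Fin T) => p u.castSucc ω) :=
    (@measurable_pi_iff Ω (Fin T) (fun _ => ℝ) (MeasurableSpace.comap X inferInstance) (fun _ => inferInstance) (fun ω (u : Fin T) => p u.castSucc ω)).mpr hcoord
  have hmSX : (MeasurableSpace.comap (fun ω (u : Fin T) => p u.castSucc ω) inferInstance) ≤ (MeasurableSpace.comap X inferInstance) := hSmX.comap_le
  have hmS : (MeasurableSpace.comap (fun ω (u : Fin T) => p u.castSucc ω) inferInstance) ≤ mΩ := hmSX.trans hmX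
  have hSmS : Measurable[(MeasurableSpace.comap (fun ω (u : Fin T) => p u.castSucc ω) inferInstance)] (fun ω (u : Fin T) => p u.castSucc ω) := measurable_iff_comap_le.mpr le_rfl
  -- the propensity scores sum to one a.e.
  have hsum : (fun ω => ∑ u : Fin (T + 1), p u ω) =ᵐ[μ] fun _ => (1 : ℝ) := by
    have hsumind : (∑ u : Fin (T + 1), fun ω => if W ω = u then (1 : ℝ) else 0)
        = fun _ : Ω => (1 : ℝ) := by
      funext ω
      rw [Finset.sum_apply]
      simp
    have h1 : (fun _ : Ω => (1 : ℝ)) =ᵐ[μ]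
        ∑ u : Fin (T + 1), μ[(fun ω => if W ω = u then (1 : ℝ) else 0)| (MeasurableSpace.comap X inferInstance)] := by
      have h := condExp_finsetSum (μ := μ) (m := (MeasurableSpace.comap X inferInstance)) (s := Finset.univ)
        (f := fun u ω => if W ω = u then (1 : ℝ) else 0) (fun u _ => hIint u)
      rwa [hsumind, condExp_const hmX] at h
    have h3 : (fun ω => ∑ u : Fin (T + 1), p u ω)
        = ∑ u : Fin (T + 1), μ[(fun ω => if W ω = u then (1 : ℝ) else 0)| (MeasurableSpace.comap X inferInstance)] := by
      funext ω
      rw [Finset.sum_apply]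
      exact Finset.sum_congr rfl fun u _ => by rw [hp u]
    rw [h3]
    exact h1.symm
  -- an mS-strongly-measurable version of p v
  obtain ⟨Q, hQsm, hpq⟩ : ∃ Q : Ω → ℝ, StronglyMeasurable[(MeasurableSpace.comap (fun ω (u : Fin T) => p u.castSucc ω) inferInstance)] Q ∧ p v =ᵐ[μ] Q := by
    by_cases hv : v = Fin.last T
    · refine ⟨fun ω => 1 - ∑ u : Fin T, p u.castSucc ω, ?_, ?_⟩
      · refine Measurable.stronglyMeasurable ?_
        exact measurable_const.sub
          (Finset.measurable_sum Finset.univ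
            (fun u _ => (measurable_pi_apply u).comp hSmS))
      · filter_upwards [hsum] with ω hω
        subst hv
        rw [Fin.sum_univ_castSucc] at hω
        linarith
    · refine ⟨fun ω => p (v.castPred hv).castSucc ω, ?_, ?_⟩
      · exact ((measurable_pi_apply (v.castPred hv)).comp hSmS).stronglyMeasurable
      · have heq2 : p v = fun ω => p (v.castPred hv).castSucc ω := by
          rw [Fin.castSucc_castPred]
        rw [← heq2]
  have hpv_int : Integrable (p v) μ := by rw [hp v]; exact integrable_condExp
  have hQint : Integrable Q μ := hpv_int.congr hpq
  have hQpos : ∀ᵐ ω ∂μ, 0 < Q ω := by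
    filter_upwards [hoverlap v, hpq] with ω h1 h2
    rw [← h2]; exact h1
  have hp_nonneg : 0 ≤ᵐ[μ] p v := by
    rw [hp v]
    exact condExp_nonneg (Filter.Eventually.of_forall fun ω => by
      by_cases h : W ω = v <;> simp [h])
  have hp_le : p v ≤ᵐ[μ] fun _ => (1 : ℝ) := by
    rw [hp v]
    have h := condExp_mono (μ := μ) (m := (MeasurableSpace.comap X inferInstance)) (hIint v) (integrable_const (1 : ℝ))
      (Filter.Eventually.of_forall fun ω => by by_cases h : W ω = v <;> simp [h])
    rwa [condExp_const hmX] at h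
  have hQbound : ∀ᵐ ω ∂μ, ‖Q ω‖ ≤ 1 := by
    filter_upwards [hpq, hp_nonneg, hp_le] with ω h1 h2 h3
    rw [← h1, Real.norm_eq_abs, abs_of_nonneg h2]
    exact h3
  -- kernel independence
  have h' : Kernel.IndepFun W (fun ω (u : Fin (T + 1)) => Y u ω)
      (condExpKernel μ (MeasurableSpace.comap X inferInstance)) (μ.trim hmX) := hstrong
  have hWY : Kernel.IndepFun W (Y v) (condExpKernel μ (MeasurableSpace.comap X inferInstance)) (μ.trim hmX) :=
    h'.comp measurable_id (measurable_pi_apply v)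
  have hq : ∀ᵐ ω ∂μ, ∀ q : ℚ,
      condExpKernel μ (MeasurableSpace.comap X inferInstance) ω (W ⁻¹' {v} ∩ Y v ⁻¹' Set.Iic (q : ℝ))
        = condExpKernel μ (MeasurableSpace.comap X inferInstance) ω (W ⁻¹' {v})
          * condExpKernel μ (MeasurableSpace.comap X inferInstance) ω (Y v ⁻¹' Set.Iic (q : ℝ)) := by
    rw [ae_all_iff]
    intro q
    exact ae_of_ae_trim hmX (hWY.measure_inter_preimage_eq_mul {v} (Set.Iic (q : ℝ))
      (measurableSet_singleton v) measurableSet_Iic)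
  -- the key pointwise multiplicativity of kernel integrals
  have hkey : ∀ᵐ ω ∂μ, ∫ y, (if W y = v then (1 : ℝ) else 0) * Y v y ∂(condExpKernel μ (MeasurableSpace.comap X inferInstance) ω)
      = (condExpKernel μ (MeasurableSpace.comap X inferInstance) ω (W ⁻¹' {v})).toReal
        * ∫ y, Y v y ∂(condExpKernel μ (MeasurableSpace.comap X inferInstance) ω) := by
    filter_upwards [hq] with ω hω
    set κ : Measure Ω := condExpKernel μ (MeasurableSpace.comap X inferInstance) ω with hκdef
    have hmap : (κ.restrict (W ⁻¹' {v})).map (Y v) = κ (W ⁻¹' {v}) • κ.map (Y v) := by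
      haveI : IsFiniteMeasure (κ (W ⁻¹' {v}) • κ.map (Y v)) := by
        constructor
        rw [Measure.smul_apply, smul_eq_mul]
        exact ENNReal.mul_lt_top (measure_lt_top _ _) (measure_lt_top _ _)
      refine ext_of_generate_finite _
        ((BorelSpace.measurable_eq (α := ℝ)).trans Real.borel_eq_generateFrom_Iic_rat)
        Real.isPiSystem_Iic_rat ?_ ?_
      · intro s hs
        simp only [Set.mem_iUnion, Set.mem_singleton_iff] at hs
        obtain ⟨q, rfl⟩ := hs
        rw [Measure.map_apply (hY v) measurableSet_Iic,
          Measure.restrict_apply (hY v measurableSet_Iic), Measure.smul_apply,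
          Measure.map_apply (hY v) measurableSet_Iic, smul_eq_mul, Set.inter_comm]
        exact hω q
      · rw [Measure.map_apply (hY v) MeasurableSet.univ, Set.preimage_univ,
          Measure.restrict_apply_univ, Measure.smul_apply,
          Measure.map_apply (hY v) MeasurableSet.univ, Set.preimage_univ,
          measure_univ, smul_eq_mul, mul_one]
    have h1 : (fun y => (if W y = v then (1 : ℝ) else 0) * Y v y)
        = (W ⁻¹' {v}).indicator (Y v) := by
      funext y; by_cases h : W y = v <;> simp [Set.indicator_apply, h]
    rw [h1, integral_indicator (hW (measurableSet_singleton v))]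
    have h2 : ∫ y in W ⁻¹' {v}, Y v y ∂κ
        = ∫ x, x ∂((κ.restrict (W ⁻¹' {v})).map (Y v)) :=
      (integral_map (hY v).aemeasurable aestronglyMeasurable_id).symm
    have h2' : ∫ x, x ∂(κ.map (Y v)) = ∫ y, Y v y ∂κ :=
      integral_map (hY v).aemeasurable aestronglyMeasurable_id
    rw [h2, hmap, integral_smul_measure, h2', smul_eq_mul]
  -- Step E: conditioning on X factorizes
  have hprodind : (fun ω => (if W ω = v then (1 : ℝ) else 0) * Y v ω)
      = (W ⁻¹' {v}).indicator (Y v) := by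
    funext ω; by_cases h : W ω = v <;> simp [Set.indicator_apply, h]
  have hprod_int : Integrable (fun ω => (if W ω = v then (1 : ℝ) else 0) * Y v ω) μ := by
    rw [hprodind]
    exact (hYint v).indicator (hW (measurableSet_singleton v))
  have hE : μ[(fun ω => (if W ω = v then (1 : ℝ) else 0) * Y v ω)| (MeasurableSpace.comap X inferInstance)]
      =ᵐ[μ] fun ω => p v ω * (μ[Y v| (MeasurableSpace.comap X inferInstance)]) ω := by
    have e1 := condExp_ae_eq_integral_condExpKernel (μ := μ) hmX hprod_int
    have e2 := condExp_ae_eq_integral_condExpKernel (μ := μ) hmX (hYint v)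
    have e3 : (fun ω => (condExpKernel μ (MeasurableSpace.comap X inferInstance) ω (W ⁻¹' {v})).toReal) =ᵐ[μ] p v := by
      have hind : (W ⁻¹' {v}).indicator (fun _ => (1 : ℝ))
          = fun ω => if W ω = v then (1 : ℝ) else 0 := by
        funext ω; by_cases h : W ω = v <;> simp [Set.indicator_apply, h]
      rw [hp v, ← hind]
      exact condExpKernel_ae_eq_condExp hmX (hW (measurableSet_singleton v))
    filter_upwards [e1, e2, e3, hkey] with ω h1 h2 h3 h4
    rw [h1, h4, h3, h2]
  -- tower + pull-out for the numerator
  have hN : μ[(fun ω => (if W ω = v then (1 : ℝ) else 0) * Y v ω)| (MeasurableSpace.comap (fun ω (u : Fin T) => p u.castSucc ω) inferInstance)]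
      =ᵐ[μ] fun ω => Q ω * (μ[Y v| (MeasurableSpace.comap (fun ω (u : Fin T) => p u.castSucc ω) inferInstance)]) ω := by
    have t1 : μ[(fun ω => (if W ω = v then (1 : ℝ) else 0) * Y v ω)| (MeasurableSpace.comap (fun ω (u : Fin T) => p u.castSucc ω) inferInstance)]
        =ᵐ[μ] μ[μ[(fun ω => (if W ω = v then (1 : ℝ) else 0) * Y v ω)| (MeasurableSpace.comap X inferInstance)]| (MeasurableSpace.comap (fun ω (u : Fin T) => p u.castSucc ω) inferInstance)] :=
      (condExp_condExp_of_le hmSX hmX).symm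
    have t2 : μ[μ[(fun ω => (if W ω = v then (1 : ℝ) else 0) * Y v ω)| (MeasurableSpace.comap X inferInstance)]| (MeasurableSpace.comap (fun ω (u : Fin T) => p u.castSucc ω) inferInstance)]
        =ᵐ[μ] μ[(fun ω => Q ω * (μ[Y v| (MeasurableSpace.comap X inferInstance)]) ω)| (MeasurableSpace.comap (fun ω (u : Fin T) => p u.castSucc ω) inferInstance)] :=
      condExp_congr_ae (hE.trans (hpq.mul (Filter.EventuallyEq.refl _ _)))
    have hmul_int : Integrable (Q * μ[Y v| (MeasurableSpace.comap X inferInstance)]) μ :=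
      integrable_condExp.bdd_mul ((hQsm.mono hmS).aestronglyMeasurable) hQbound
    have t3 : μ[(fun ω => Q ω * (μ[Y v| (MeasurableSpace.comap X inferInstance)]) ω)| (MeasurableSpace.comap (fun ω (u : Fin T) => p u.castSucc ω) inferInstance)]
        =ᵐ[μ] fun ω => Q ω * (μ[μ[Y v| (MeasurableSpace.comap X inferInstance)]| (MeasurableSpace.comap (fun ω (u : Fin T) => p u.castSucc ω) inferInstance)]) ω :=
      condExp_mul_of_stronglyMeasurable_left hQsm hmul_int integrable_condExp
    have t4 : (fun ω => Q ω * (μ[μ[Y v| (MeasurableSpace.comap X inferInstance)]| (MeasurableSpace.comap (fun ω (u : Fin T) => p u.castSucc ω) inferInstance)]) ω)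
        =ᵐ[μ] fun ω => Q ω * (μ[Y v| (MeasurableSpace.comap (fun ω (u : Fin T) => p u.castSucc ω) inferInstance)]) ω :=
      (Filter.EventuallyEq.refl _ Q).mul (condExp_condExp_of_le hmSX hmX)
    exact t1.trans (t2.trans (t3.trans t4))
  -- denominator
  have hD : μ[(fun ω => if W ω = v then (1 : ℝ) else 0)| (MeasurableSpace.comap (fun ω (u : Fin T) => p u.castSucc ω) inferInstance)] =ᵐ[μ] Q := by
    refine (condExp_condExp_of_le hmSX hmX).symm.trans ?_
    rw [← hp v]
    exact (condExp_congr_ae hpq).trans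
      (Filter.EventuallyEq.of_eq (condExp_of_stronglyMeasurable hmS hQsm hQint))
  -- conclude
  have hfun : (fun ω' => (if W ω' = v then (1 : ℝ) else 0) * Y (W ω') ω')
      = fun ω' => (if W ω' = v then (1 : ℝ) else 0) * Y v ω' := by
    funext ω'; by_cases h : W ω' = v <;> simp [h]
  rw [hfun]
  filter_upwards [hN, hD, hQpos] with ω h1 h2 h3
  rw [h1, h2, mul_comm, mul_div_assoc, div_self h3.ne', mul_one]

/-- Under strong unconfoundedness and overlap, the conditional average
treatment effect given the full propensity score vector `(p(1|X),...,p(T-1|X))` is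
identified: `E[Y(w') - Y(w) | p(1|X),...,p(T-1|X)]
  = E[Y^obs | W = w', p-vector] - E[Y^obs | W = w, p-vector]` a.s., where the conditional
expectations given the event `W = v` and the score vector are the ratios
`E[1{W=v}·Y^obs | p-vector] / E[1{W=v} | p-vector]`.
(Treatments are indexed by `Fin (T+1)`; the vector collects the first `T` scores.) -/
theorem cate_identified_by_ps_vector {Ω E : Type*} [mΩ : MeasurableSpace Ω]
    [StandardBorelSpace Ω] [MeasurableSpace E]
    (μ : Measure Ω) [IsProbabilityMeasure μ] (T : ℕ)
    (W : Ω → Fin (T + 1)) (X : Ω → E) (Y : Fin (T + 1) → Ω → ℝ)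
    (hW : Measurable W) (hX : Measurable X) (hY : ∀ w, Measurable (Y w))
    (hYint : ∀ w, Integrable (Y w) μ)
    (p : Fin (T + 1) → Ω → ℝ)
    (hp : ∀ w, p w = μ[(fun ω => if W ω = w then (1 : ℝ) else 0) |
        MeasurableSpace.comap X inferInstance])
    (hoverlap : ∀ w, ∀ᵐ ω ∂μ, 0 < p w ω)
    (hmX : MeasurableSpace.comap X inferInstance ≤ mΩ)
    (hstrong : CondIndepFun (MeasurableSpace.comap X inferInstance) hmX
        W (fun ω (w : Fin (T + 1)) => Y w ω) μ)
    (w w' : Fin (T + 1)) :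
    μ[(fun ω => Y w' ω - Y w ω) |
        MeasurableSpace.comap (fun ω (v : Fin T) => p v.castSucc ω) inferInstance]
      =ᵐ[μ] fun ω =>
        ((μ[(fun ω' => (if W ω' = w' then (1 : ℝ) else 0) * Y (W ω') ω') |
            MeasurableSpace.comap (fun ω'' (v : Fin T) => p v.castSucc ω'') inferInstance]) ω)
          / ((μ[(fun ω' => if W ω' = w' then (1 : ℝ) else 0) |
            MeasurableSpace.comap (fun ω'' (v : Fin T) => p v.castSucc ω'') inferInstance]) ω)
        - ((μ[(fun ω' => (if W ω' = w then (1 : ℝ) else 0) * Y (W ω') ω') |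
            MeasurableSpace.comap (fun ω'' (v : Fin T) => p v.castSucc ω'') inferInstance]) ω)
          / ((μ[(fun ω' => if W ω' = w then (1 : ℝ) else 0) |
            MeasurableSpace.comap (fun ω'' (v : Fin T) => p v.castSucc ω'') inferInstance]) ω) := by
  have hA := cate_aux μ T W X Y hW hY hYint p hp hoverlap hmX hstrong w'
  have hB := cate_aux μ T W X Y hW hY hYint p hp hoverlap hmX hstrong w
  have hsub := condExp_sub (μ := μ)
    (m := MeasurableSpace.comap (fun ω (v : Fin T) => p v.castSucc ω) inferInstance)
    (hYint w') (hYint w)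
  have heq : (fun ω => Y w' ω - Y w ω) = Y w' - Y w := rfl
  rw [heq]
  filter_upwards [hA, hB, hsub] with ω h1 h2 h3
  rw [h3, Pi.sub_apply, ← h1, ← h2]
end
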